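/- arXiv:2104.03937 — 11 statements merged into one kernel-verified Lean document; each statement's English description precedes it below -/
import Mathlib

section
/- If a graph G has at least one edge, then the proper thinness of G is at most the bandwidth of G. -/
/-- An ordering (given by an injective labeling `f`) is consistent with a partition
(given by a class function `c`): for `u < v < w` with `u, v` in the same class
and `wu` an edge, `wv` is also an edge. -/
def ConsistentWith {V : Type*} {K : Type*} (G : SimpleGraph V) (f : V → ℕ) (c : V → K) : Prop :=
  ∀ u v w : V, f u < f v → f v < f w → c u = c v → G.Adj w u → G.Adj w v

/-- The reverse of the ordering given by `f` is consistent with the partition `c`. -/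
def RevConsistentWith {V : Type*} {K : Type*} (G : SimpleGraph V) (f : V → ℕ) (c : V → K) : Prop :=
  ∀ u v w : V, f u < f v → f v < f w → c v = c w → G.Adj u w → G.Adj u v

/-- The proper thinness of `G`: the least `k` such that `G` admits a vertex ordering
and a partition into `k` classes with both the ordering and its reverse consistent. -/
noncomputable def pthin {V : Type*} (G : SimpleGraph V) : ℕ :=
  sInf {k | ∃ f : V → ℕ, Function.Injective f ∧
    ∃ c : V → Fin k, ConsistentWith G f c ∧ RevConsistentWith G f c}

/-- The bandwidth of `G`: the least `b` such that there is an injective labeling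
`f : V → ℤ` with `|f u - f v| ≤ b` over all edges `uv`. -/
noncomputable def bandwidth {V : Type*} (G : SimpleGraph V) : ℕ :=
  sInf {b | ∃ f : V → ℤ, Function.Injective f ∧
    ∀ u v : V, G.Adj u v → (f u - f v).natAbs ≤ b}

/-- If a graph `G` has at least one edge, then the proper thinness of `G` is at most
its bandwidth. -/
theorem pthin_le_bandwidth {V : Type*} [Fintype V] (G : SimpleGraph V)
    (h : ∃ u v : V, G.Adj u v) : pthin G ≤ bandwidth G := by
  classical
  obtain ⟨x, y, hxy⟩ := h
  have hne : Nonempty V := ⟨x⟩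
  -- the bandwidth set is nonempty
  have hbwne : {b | ∃ f : V → ℤ, Function.Injective f ∧
      ∀ u v : V, G.Adj u v → (f u - f v).natAbs ≤ b}.Nonempty := by
    refine ⟨Fintype.card V, fun v => ((Fintype.equivFin V) v : ℕ), ?_, ?_⟩
    · intro a b hab
      simp only at hab
      apply (Fintype.equivFin V).injective
      have : ((Fintype.equivFin V) a : ℕ) = ((Fintype.equivFin V) b : ℕ) := by
        exact_mod_cast hab
      exact Fin.ext this
    · intro u v _
      simp only
      have h1 := ((Fintype.equivFin V) u).isLt
      have h2 := ((Fintype.equivFin V) v).isLt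
      omega
  obtain ⟨f, hinj, hb'⟩ := Nat.sInf_mem hbwne
  set b := bandwidth G with hbdef
  have hb : ∀ u v : V, G.Adj u v → (f u - f v).natAbs ≤ b := hb'
  clear hb'
  have hbpos : 0 < b := by
    have h1 := hb x y hxy
    have h2 : f x ≠ f y := fun hc => (G.ne_of_adj hxy) (hinj hc)
    omega
  -- min of f over V
  have himgne : (Finset.univ.image f).Nonempty := ⟨f x, Finset.mem_image_of_mem f (Finset.mem_univ x)⟩
  set m : ℤ := (Finset.univ.image f).min' himgne with hmdef
  have hm : ∀ v : V, m ≤ f v := fun v =>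
    Finset.min'_le _ _ (Finset.mem_image_of_mem f (Finset.mem_univ v))
  set g : V → ℕ := fun v => (f v - m).toNat with hgdef
  have hglt : ∀ u v : V, g u < g v → f u < f v := by
    intro u v huv
    have h1 := hm u; have h2 := hm v
    simp only [hgdef] at huv
    omega
  have hginj : Function.Injective g := by
    intro a c hac
    apply hinj
    have h1 := hm a; have h2 := hm c
    simp only [hgdef] at hac
    omega
  have hclt : ∀ v : V, (f v % (b : ℤ)).toNat < b := by
    intro v
    have h1 : 0 ≤ f v % (b : ℤ) := Int.emod_nonneg _ (by exact_mod_cast hbpos.ne')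
    have h2 : f v % (b : ℤ) < (b : ℤ) := Int.emod_lt_of_pos _ (by exact_mod_cast hbpos)
    omega
  set c : V → Fin b := fun v => ⟨(f v % (b : ℤ)).toNat, hclt v⟩ with hcdef
  have hcgap : ∀ u v : V, c u = c v → f u < f v → (b : ℤ) ≤ f v - f u := by
    intro u v hcv hlt
    have hmod : f u % (b : ℤ) = f v % (b : ℤ) := by
      have this : (f u % (b : ℤ)).toNat = (f v % (b : ℤ)).toNat := congrArg Fin.val hcv
      have h1 : 0 ≤ f u % (b : ℤ) := Int.emod_nonneg _ (by exact_mod_cast hbpos.ne')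
      have h2 : 0 ≤ f v % (b : ℤ) := Int.emod_nonneg _ (by exact_mod_cast hbpos.ne')
      omega
    have hdvd : (b : ℤ) ∣ (f v - f u) := by
      apply Int.dvd_of_emod_eq_zero
      rw [Int.sub_emod, hmod]
      simp
    exact Int.le_of_dvd (by omega) hdvd
  have hmem : b ∈ {k | ∃ f : V → ℕ, Function.Injective f ∧
      ∃ c : V → Fin k, ConsistentWith G f c ∧ RevConsistentWith G f c} := by
    refine ⟨g, hginj, c, ?_, ?_⟩
    · intro u v w huv hvw hcuv hadj
      have h1 := hglt u v huv
      have h2 := hglt v w hvw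
      have h3 := hcgap u v hcuv h1
      have h4 := hb w u hadj
      exact absurd h4 (by omega)
    · intro u v w huv hvw hcvw hadj
      have h1 := hglt u v huv
      have h2 := hglt v w hvw
      have h3 := hcgap v w hcvw h2
      have h4 := hb u w hadj
      exact absurd h4 (by omega)
  exact Nat.sInf_le hmem
end

section
/- For every graph G, the independent thinness of G is at most its pathwidth plus one. -/
open Classical Finset

noncomputable def pick (k : ℕ) (s : Finset (Fin (k+1))) : Fin (k+1) :=
  if h : sᶜ.Nonempty then h.choose else 0

lemma pick_not_mem {k : ℕ} {s : Finset (Fin (k+1))} (hs : s.card ≤ k) : pick k s ∉ s := by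
  have h : sᶜ.Nonempty := by
    rw [← Finset.card_pos, Finset.card_compl]
    simp only [Fintype.card_fin]
    omega
  rw [pick, dif_pos h]
  have := h.choose_spec
  simp only [Finset.mem_compl] at this
  exact this

noncomputable def greedy (k : ℕ) (A : ℕ → Finset ℕ) (hA : ∀ i j, j ∈ A i → j < i)
    (i : ℕ) : Fin (k+1) :=
  pick k ((A i).attach.image fun j => greedy k A hA j.1)
termination_by i
decreasing_by exact hA i j.1 j.2

lemma greedy_spec {k : ℕ} {A : ℕ → Finset ℕ} (hA : ∀ i j, j ∈ A i → j < i)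
    {i : ℕ} (hcard : (A i).card ≤ k) {j : ℕ} (hj : j ∈ A i) :
    greedy k A hA i ≠ greedy k A hA j := by
  have h1 : ((A i).attach.image fun j => greedy k A hA j.1).card ≤ k :=
    le_trans (Finset.card_image_le.trans (by simp)) hcard
  have h2 := pick_not_mem h1
  rw [greedy]
  intro he
  exact h2 (by rw [he]; exact Finset.mem_image.2 ⟨⟨j, hj⟩, Finset.mem_attach _ _, rfl⟩)



/-- The independent thinness of `G`: the least `k` such that `G` admits a vertex ordering
and a partition into `k` independent classes consistent with the ordering. -/
noncomputable def indthin {V : Type*} (G : SimpleGraph V) : ℕ :=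
  sInf {k | ∃ f : V → ℕ, Function.Injective f ∧
    ∃ c : V → Fin k, ConsistentWith G f c ∧ ∀ u v : V, c u = c v → ¬ G.Adj u v}

/-- A path decomposition of `G`: bags `X 0, ..., X (r-1)` covering all vertices and
all edges, with each vertex appearing in a contiguous interval of bags. -/
def IsPathDecomp {V : Type*} (G : SimpleGraph V) {r : ℕ} (X : Fin r → Finset V) : Prop :=
  (∀ v : V, ∃ i, v ∈ X i) ∧
  (∀ u v : V, G.Adj u v → ∃ i, u ∈ X i ∧ v ∈ X i) ∧
  (∀ v : V, ∀ i j k : Fin r, i ≤ j → j ≤ k → v ∈ X i → v ∈ X k → v ∈ X j)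

/-- The pathwidth of `G`: the minimum over path decompositions of (max bag size) - 1. -/
noncomputable def pathwidth {V : Type*} (G : SimpleGraph V) : ℕ :=
  sInf {w | ∃ (r : ℕ) (X : Fin r → Finset V), IsPathDecomp G X ∧ ∀ i, (X i).card ≤ w + 1}

/-- For every graph `G`, the independent thinness of `G` is at most its pathwidth plus one. -/
theorem indthin_le_pathwidth_add_one {V : Type*} [Fintype V] (G : SimpleGraph V) :
    indthin G ≤ pathwidth G + 1 := by
  classical
  -- the pathwidth set is nonempty
  have hne : {w | ∃ (r : ℕ) (X : Fin r → Finset V), IsPathDecomp G X ∧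
      ∀ i, (X i).card ≤ w + 1}.Nonempty := by
    refine ⟨Fintype.card V, 1, fun _ => Finset.univ, ⟨?_, ?_, ?_⟩, ?_⟩
    · exact fun v => ⟨0, Finset.mem_univ v⟩
    · exact fun u v _ => ⟨0, Finset.mem_univ u, Finset.mem_univ v⟩
    · intro v i j k _ _ _ _; exact Finset.mem_univ v
    · intro i; simp
  obtain ⟨r, X, hX, hb⟩ := Nat.sInf_mem hne
  set w := pathwidth G with hw
  apply Nat.sInf_le
  rcases isEmpty_or_nonempty V with hV | hV
  · refine ⟨fun _ => 0, fun a b _ => isEmptyElim a, fun v => isEmptyElim v,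
      fun u => isEmptyElim u, fun u => isEmptyElim u⟩
  -- main construction
  have hN : 0 < Fintype.card V := Fintype.card_pos
  set N := Fintype.card V with hNdef
  set eV := Fintype.equivFin V with heV
  -- leftmost bag of each vertex
  have hlne : ∀ v : V, (Finset.univ.filter (fun i => v ∈ X i)).Nonempty := by
    intro v
    obtain ⟨i, hi⟩ := hX.1 v
    exact ⟨i, by simp [hi]⟩
  set l : V → Fin r := fun v => (Finset.univ.filter (fun i => v ∈ X i)).min' (hlne v) with hl
  have hl1 : ∀ v, v ∈ X (l v) := by
    intro v
    have := Finset.min'_mem _ (hlne v)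
    simpa using this
  have hl2 : ∀ (v : V) (i : Fin r), v ∈ X i → l v ≤ i := by
    intro v i hi
    exact Finset.min'_le _ _ (by simp [hi])
  set f : V → ℕ := fun v => (l v).val * N + (eV v).val with hf
  have hisLt : ∀ x : V, (eV x).val < N := fun x => (eV x).isLt
  have hfinj : Function.Injective f := by
    intro u v huv
    have h1 : (eV u).val = (eV v).val := by
      have h := congrArg (· % N) huv
      simp only [hf] at h
      rwa [Nat.mul_comm, Nat.mul_add_mod, Nat.mul_comm ((l v : ℕ)) N, Nat.mul_add_mod,
        Nat.mod_eq_of_lt (hisLt u), Nat.mod_eq_of_lt (hisLt v)] at h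
    exact eV.injective (Fin.ext h1)
  have hfl : ∀ u v : V, f u < f v → (l u : ℕ) ≤ (l v : ℕ) := by
    intro u v huv
    by_contra h
    push_neg at h
    have hbv : (eV v).val < N := (eV v).isLt
    have : f v < ((l v).val + 1) * N := by
      rw [add_mul, one_mul]; simp only [hf]; omega
    have h2 : ((l v).val + 1) * N ≤ (l u).val * N := Nat.mul_le_mul_right N h
    have h3 : (l u).val * N ≤ f u := Nat.le_add_right _ _
    omega
  set rank : V → ℕ := fun v => (Finset.univ.filter (fun u => f u < f v)).card with hrk
  have hrank_lt : ∀ u v : V, f u < f v → rank u < rank v := by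
    intro u v huv
    apply Finset.card_lt_card
    constructor
    · intro z hz
      simp only [Finset.mem_filter, Finset.mem_univ, true_and] at hz ⊢
      omega
    · intro hsub
      have : u ∈ Finset.univ.filter (fun z => f z < f v) := by simp [huv]
      have := hsub this
      simp at this
  have hrank_inj : ∀ u v : V, rank u = rank v → u = v := by
    intro u v huv
    rcases lt_trichotomy (f u) (f v) with h | h | h
    · exact absurd huv (Nat.ne_of_lt (hrank_lt u v h))
    · exact hfinj h
    · exact absurd huv.symm (Nat.ne_of_lt (hrank_lt v u h))
  set A : ℕ → Finset ℕ := fun i =>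
    (Finset.univ.filter (fun u : V => rank u < i ∧ ∀ v : V, rank v = i → u ∈ X (l v))).image rank
    with hA
  have hAlt : ∀ i j, j ∈ A i → j < i := by
    intro i j hj
    simp only [hA, Finset.mem_image, Finset.mem_filter, Finset.mem_univ, true_and] at hj
    obtain ⟨u, ⟨h1, _⟩, h2⟩ := hj
    omega
  have hAcard : ∀ v : V, (A (rank v)).card ≤ w := by
    intro v
    have hsub : (Finset.univ.filter
        (fun u : V => rank u < rank v ∧ ∀ v' : V, rank v' = rank v → u ∈ X (l v')))
        ⊆ (X (l v)).erase v := by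
      intro u hu
      simp only [Finset.mem_filter, Finset.mem_univ, true_and] at hu
      refine Finset.mem_erase.2 ⟨?_, hu.2 v rfl⟩
      intro he
      exact absurd rfl (Nat.ne_of_lt (he ▸ hu.1))
    have h2 : (A (rank v)).card ≤ ((X (l v)).erase v).card := by
      simp only [hA]
      exact Finset.card_image_le.trans (Finset.card_le_card hsub)
    have h3 := Finset.card_erase_of_mem (hl1 v)
    have h4 : (X (l v)).card ≤ w + 1 := hb (l v)
    have h5 : 0 < (X (l v)).card := Finset.card_pos.2 ⟨v, hl1 v⟩
    clear_value w
    clear hb hne hw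
    omega
  set c : V → Fin (w + 1) := fun v => greedy w A hAlt (rank v) with hc
  -- key: vertices sharing a bag with f u < f v get different colors
  have hkey : ∀ u v : V, f u < f v → (∃ i, u ∈ X i ∧ v ∈ X i) → c u ≠ c v := by
    intro u v huv ⟨i, hui, hvi⟩
    have hulv : u ∈ X (l v) := by
      refine hX.2.2 u (l u) (l v) i ?_ (hl2 v i hvi) (hl1 u) hui
      exact Fin.mk_le_mk.2 (hfl u v huv)
    have hmem : rank u ∈ A (rank v) := by
      simp only [hA, Finset.mem_image, Finset.mem_filter, Finset.mem_univ, true_and]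
      refine ⟨u, ⟨hrank_lt u v huv, ?_⟩, rfl⟩
      intro v' hv'
      rwa [hrank_inj v' v hv']
    exact fun he => greedy_spec hAlt (hAcard v) hmem he.symm
  refine ⟨f, hfinj, c, ?_, ?_⟩
  · -- consistency (vacuously: the hypotheses are contradictory)
    intro u v ww h1 h2 hcc hadj
    exfalso
    obtain ⟨i, hwi, hui⟩ := hX.2.1 ww u hadj
    rcases le_or_gt (l v) i with hle | hlt
    · have hulv : u ∈ X (l v) :=
        hX.2.2 u (l u) (l v) i (Fin.mk_le_mk.2 (hfl u v h1)) hle (hl1 u) hui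
      exact hkey u v h1 ⟨l v, hulv, hl1 v⟩ hcc
    · have h3 : l ww ≤ i := hl2 ww i hwi
      have h4 : (l v : ℕ) ≤ (l ww : ℕ) := hfl v ww h2
      have h5 : (l ww : ℕ) ≤ (i : ℕ) := h3
      have h6 : (i : ℕ) < (l v : ℕ) := hlt
      omega
  · -- independence
    intro u v hcc hadj
    have hne' : f u ≠ f v := fun h => G.ne_of_adj hadj (hfinj h)
    obtain ⟨i, hui, hvi⟩ := hX.2.1 u v hadj
    rcases lt_or_gt_of_ne hne' with h | h
    · exact hkey u v h ⟨i, hui, hvi⟩ hcc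
    · exact hkey v u h ⟨i, hvi, hui⟩ hcc.symm
end

section
/- For every graph G, the proper independent thinness of G is at most its bandwidth plus one. -/
/-- The proper independent thinness of `G`: the least `k` such that `G` admits an
ordering and a partition into `k` independent classes with both the ordering and
its reverse consistent with the partition. -/
noncomputable def indpthin {V : Type*} (G : SimpleGraph V) : ℕ :=
  sInf {k | ∃ f : V → ℕ, Function.Injective f ∧
    ∃ c : V → Fin k, ConsistentWith G f c ∧ RevConsistentWith G f c ∧
      ∀ u v : V, c u = c v → ¬ G.Adj u v}

/-- For every graph `G`, the proper independent thinness of `G` is at most its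
bandwidth plus one. -/
theorem indpthin_le_bandwidth_add_one {V : Type*} [Fintype V] (G : SimpleGraph V) :
    indpthin G ≤ bandwidth G + 1 := by
  cases isEmpty_or_nonempty V with
  | inl h =>
    have h0 : (0:ℕ) ∈ {k | ∃ f : V → ℕ, Function.Injective f ∧
        ∃ c : V → Fin k, ConsistentWith G f c ∧ RevConsistentWith G f c ∧
          ∀ u v : V, c u = c v → ¬ G.Adj u v} :=
      ⟨fun _ => 0, fun a => isEmptyElim a, fun v => isEmptyElim v,
        fun u => isEmptyElim u, fun u => isEmptyElim u, fun u => isEmptyElim u⟩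
    exact le_trans (Nat.sInf_le h0) (Nat.zero_le _)
  | inr h =>
    have hne : {n | ∃ f : V → ℤ, Function.Injective f ∧
        ∀ u v : V, G.Adj u v → (f u - f v).natAbs ≤ n}.Nonempty := by
      obtain ⟨e, -⟩ : ∃ e : V ≃ Fin (Fintype.card V), True := ⟨Fintype.equivFin V, trivial⟩
      refine ⟨Fintype.card V, fun v => ((e v : ℕ) : ℤ), ?_, ?_⟩
      · intro a b hab
        have hab' : ((e a : ℕ) : ℤ) = ((e b : ℕ) : ℤ) := hab
        exact e.injective (Fin.ext (by exact_mod_cast hab'))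
      · intro u v _
        show (((e u : ℕ) : ℤ) - ((e v : ℕ) : ℤ)).natAbs ≤ Fintype.card V
        have h1 : (e u : ℕ) < Fintype.card V := (e u).isLt
        have h2 : (e v : ℕ) < Fintype.card V := (e v).isLt
        omega
    obtain ⟨b, hbdef⟩ : ∃ b, bandwidth G = b := ⟨_, rfl⟩
    rw [hbdef]
    unfold bandwidth at hbdef
    obtain ⟨f, hinj, hbd⟩ := Nat.sInf_mem hne
    rw [hbdef] at hbd
    clear hbdef hne
    have himne : (Finset.univ.image f).Nonempty := by
      simp [Finset.univ_nonempty]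
    obtain ⟨m, hm⟩ : ∃ m, m = Finset.min' (Finset.univ.image f) himne := ⟨_, rfl⟩
    have hmle : ∀ v, m ≤ f v := fun v =>
      hm ▸ Finset.min'_le _ _ (Finset.mem_image_of_mem f (Finset.mem_univ v))
    clear hm himne
    have htn : ∀ v, ((f v - m).toNat : ℤ) = f v - m := fun v =>
      Int.toNat_of_nonneg (by linarith [hmle v])
    have key : ∀ u v : V, (f u - m).toNat % (b+1) = (f v - m).toNat % (b+1) →
        ((b : ℤ) + 1) ∣ f v - f u := by
      intro u v hc
      have h1 : ((b+1 : ℕ) : ℤ) ∣ ((f v - m).toNat : ℤ) - ((f u - m).toNat : ℤ) :=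
        Nat.ModEq.dvd (hc : Nat.ModEq (b+1) _ _)
      rw [htn u, htn v] at h1
      have hcst : ((b+1 : ℕ) : ℤ) = (b : ℤ) + 1 := by push_cast; ring
      rw [hcst] at h1
      have heq : (f v - m) - (f u - m) = f v - f u := by ring
      rwa [heq] at h1
    have hpos : 0 < b + 1 := Nat.succ_pos b
    refine Nat.sInf_le ⟨fun v => (f v - m).toNat, ?_,
      fun v => ⟨(f v - m).toNat % (b+1), Nat.mod_lt _ hpos⟩, ?_, ?_, ?_⟩
    · intro u v huv
      have huv' : (f u - m).toNat = (f v - m).toNat := huv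
      apply hinj
      have h1 := htn u
      have h2 := htn v
      omega
    · intro u v w h1 h2 hc hadj
      exfalso
      have h1' : (f u - m).toNat < (f v - m).toNat := h1
      have h2' : (f v - m).toNat < (f w - m).toNat := h2
      have hcv : (f u - m).toNat % (b+1) = (f v - m).toNat % (b+1) :=
        congrArg Fin.val hc
      have hdvd := key u v hcv
      have hfu : f u < f v := by have := htn u; have := htn v; omega
      have hfv : f v < f w := by have := htn v; have := htn w; omega
      have hge := Int.le_of_dvd (by omega) hdvd
      have hle := hbd w u hadj
      omega
    · intro u v w h1 h2 hc hadj
      exfalso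
      have h1' : (f u - m).toNat < (f v - m).toNat := h1
      have h2' : (f v - m).toNat < (f w - m).toNat := h2
      have hcv : (f v - m).toNat % (b+1) = (f w - m).toNat % (b+1) :=
        congrArg Fin.val hc
      have hdvd := key v w hcv
      have hfu : f u < f v := by have := htn u; have := htn v; omega
      have hfv : f v < f w := by have := htn v; have := htn w; omega
      have hge := Int.le_of_dvd (by omega) hdvd
      have hle := hbd u w hadj
      omega
    · intro u v hc hadj
      have hcv : (f u - m).toNat % (b+1) = (f v - m).toNat % (b+1) :=
        congrArg Fin.val hc
      have hdvd := key u v hcv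
      have hle := hbd u v hadj
      have hfne : f u ≠ f v := fun e => G.ne_of_adj hadj (hinj e)
      rcases lt_or_gt_of_ne hfne with hlt | hlt
      · have := Int.le_of_dvd (by omega) hdvd
        omega
      · have := Int.le_of_dvd (by omega) (dvd_neg.mpr hdvd)
        omega
end

section
/- For every connected graph G, the proper thinness of G is at most |V(G)| minus the diameter of G. -/
open Finset

/-- Intermediate vertices on shortest paths: every distance value up to `dist u v`
is attained. -/
lemma exists_dist_eq_of_le_aux {V : Type*} {G : SimpleGraph V} (hG : G.Connected) (u v : V)
    {j : ℕ} (hj : j ≤ G.dist u v) : ∃ w, G.dist u w = j := by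
  obtain ⟨p, hp⟩ := hG.exists_walk_length_eq_dist u v
  refine ⟨p.getVert j, le_antisymm ?_ ?_⟩
  · -- dist u (getVert j) ≤ j
    clear hj
    induction j with
    | zero => simp [p.getVert_zero]
    | succ i ih =>
      by_cases h : i < p.length
      · have hadj := p.adj_getVert_succ h
        have h1 : G.dist (p.getVert i) (p.getVert (i + 1)) = 1 :=
          SimpleGraph.dist_eq_one_iff_adj.mpr hadj
        have h2 : G.dist u (p.getVert (i + 1)) ≤
            G.dist u (p.getVert i) + G.dist (p.getVert i) (p.getVert (i + 1)) :=
          hG.dist_triangle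
        omega
      · have h1 : p.getVert (i + 1) = p.getVert i := by
          rw [p.getVert_of_length_le (by omega), p.getVert_of_length_le (by omega)]
        rw [h1]; omega
  · -- j ≤ dist u (getVert j)
    have aux : ∀ i, G.dist (p.getVert (p.length - i)) v ≤ i := by
      intro i
      induction i with
      | zero => simp [p.getVert_length]
      | succ i ih =>
        by_cases h : p.length ≤ i
        · have h1 : p.length - (i + 1) = p.length - i := by omega
          rw [h1]; omega
        · have hm : p.length - (i + 1) < p.length := by omega
          have hs : p.length - (i + 1) + 1 = p.length - i := by omega
          have hadj := p.adj_getVert_succ hm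
          rw [hs] at hadj
          have h1 : G.dist (p.getVert (p.length - (i + 1))) (p.getVert (p.length - i)) = 1 :=
            SimpleGraph.dist_eq_one_iff_adj.mpr hadj
          have h2 : G.dist (p.getVert (p.length - (i + 1))) v ≤
              G.dist (p.getVert (p.length - (i + 1))) (p.getVert (p.length - i)) +
                G.dist (p.getVert (p.length - i)) v :=
            hG.dist_triangle
          omega
    have hjlen : j ≤ p.length := by omega
    have h3 : p.length - (p.length - j) = j := by omega
    have h4 : G.dist (p.getVert j) v ≤ p.length - j := by
      have := aux (p.length - j)
      rwa [h3] at this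
    have h5 : G.dist u v ≤ G.dist u (p.getVert j) + G.dist (p.getVert j) v :=
      hG.dist_triangle
    omega

/-- If there is an injective labeling with bounded stretch on edges, the proper
thinness is bounded. -/
lemma pthin_le_of_bandwidth {V : Type*} (G : SimpleGraph V) {f : V → ℕ} {b : ℕ}
    (hb : 0 < b) (hf : Function.Injective f)
    (hband : ∀ x y, G.Adj x y → f y ≤ f x + b) : pthin G ≤ b := by
  have key : ∀ s t : ℕ, s % b = t % b → s < t → s + b ≤ t := by
    intro s t hst h
    have hs := Nat.div_add_mod s b
    have ht := Nat.div_add_mod t b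
    have hq : s / b < t / b := by
      by_contra hq
      push_neg at hq
      have : b * (t / b) ≤ b * (s / b) := Nat.mul_le_mul_left b hq
      omega
    have h2 : b * (s / b + 1) ≤ b * (t / b) := Nat.mul_le_mul_left b hq
    rw [Nat.mul_add, Nat.mul_one] at h2
    omega
  apply Nat.sInf_le
  refine ⟨f, hf, fun v => ⟨f v % b, Nat.mod_lt _ hb⟩, ?_, ?_⟩
  · intro x y z hxy hyz hc hadj
    have hmod : f x % b = f y % b := congrArg Fin.val hc
    have h1 : f x + b ≤ f y := key _ _ hmod hxy
    have h2 : f z ≤ f x + b := hband x z hadj.symm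
    exfalso; omega
  · intro x y z hxy hyz hc hadj
    have hmod : f y % b = f z % b := congrArg Fin.val hc
    have h1 : f y + b ≤ f z := key _ _ hmod hyz
    have h2 : f z ≤ f x + b := hband x z hadj
    exfalso; omega

/-- For every connected graph `G`, the proper thinness of `G` is at most
`|V(G)|` minus the diameter of `G`. -/
theorem pthin_le_card_sub_diam {V : Type*} [Fintype V] (G : SimpleGraph V)
    (hG : G.Connected) : pthin G ≤ Fintype.card V - G.diam := by
  classical
  haveI : Nonempty V := hG.nonempty
  set n := Fintype.card V with hn
  set D := G.diam with hDdef
  obtain ⟨u, v, huv⟩ := G.exists_dist_eq_diam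
  have hDn : D + 1 ≤ n := by
    obtain ⟨p, hp, hlen⟩ := hG.exists_path_of_dist u v
    have := hp.length_lt
    omega
  have hb : 0 < n - D := by omega
  set d : V → ℕ := fun w => G.dist u w with hd
  set e := Fintype.equivFin V with he
  set Kf : V → ℕ := fun w => d w * n + (e w : ℕ) with hK
  have hen : ∀ w, (e w : ℕ) < n := fun w => (e w).isLt
  have hKmono : ∀ w w', d w < d w' → Kf w < Kf w' := by
    intro w w' h
    have h1 : (d w + 1) * n ≤ d w' * n := Nat.mul_le_mul_right n h
    rw [Nat.add_mul, Nat.one_mul] at h1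
    have h2 := hen w
    simp only [hK]
    omega
  have hKd : ∀ w w', Kf w ≤ Kf w' → d w ≤ d w' := by
    intro w w' h
    by_contra hc
    exact absurd (hKmono w' w (by omega)) (by omega)
  have hKinj : Function.Injective Kf := by
    intro w w' h
    have h1 : d w = d w' := le_antisymm (hKd w w' h.le) (hKd w' w h.ge)
    have h2 : (e w : ℕ) = (e w' : ℕ) := by
      simp only [hK] at h
      rw [h1] at h
      omega
    exact e.injective (Fin.ext h2)
  set f : V → ℕ := fun w => #(univ.filter (fun x => Kf x < Kf w)) with hf
  have hfmono : ∀ w w', Kf w < Kf w' → f w < f w' := by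
    intro w w' h
    apply Finset.card_lt_card
    constructor
    · intro x hx
      simp only [mem_filter, mem_univ, true_and] at hx ⊢
      omega
    · intro hsub
      have : w ∈ univ.filter (fun x => Kf x < Kf w') := by
        simp only [mem_filter, mem_univ, true_and]; exact h
      have := hsub this
      simp only [mem_filter] at this
      omega
  have hfinj : Function.Injective f := by
    intro w w' h
    by_contra hc
    have hK' : Kf w ≠ Kf w' := fun h' => hc (hKinj h')
    rcases lt_or_gt_of_ne hK' with h' | h'
    · exact absurd h (Nat.ne_of_lt (hfmono _ _ h'))
    · exact absurd h.symm (Nat.ne_of_lt (hfmono _ _ h'))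
  have hband : ∀ x y, G.Adj x y → f y ≤ f x + (n - D) := by
    intro x y hadj
    rcases le_or_gt (Kf y) (Kf x) with hKle | hKlt
    · have : f y ≤ f x := by
        apply Finset.card_le_card
        intro w hw
        simp only [mem_filter, mem_univ, true_and] at hw ⊢
        omega
      omega
    · have hdxy : d x ≤ d y := hKd x y hKlt.le
      have hdy1 : d y ≤ d x + 1 := by
        have h1 : G.dist x y = 1 := SimpleGraph.dist_eq_one_iff_adj.mpr hadj
        have h2 : G.dist u y ≤ G.dist u x + G.dist x y := hG.dist_triangle
        simp only [hd]; omega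
      set S : Finset V := univ.filter (fun w => d w = d x ∨ d w = d x + 1) with hS
      have hyS : y ∈ S := by
        simp only [hS, mem_filter, mem_univ, true_and]; omega
      have hsub : univ.filter (fun w => Kf w < Kf y) \ univ.filter (fun w => Kf w < Kf x)
          ⊆ S.erase y := by
        intro w hw
        simp only [mem_sdiff, mem_filter, mem_univ, true_and, not_lt] at hw
        obtain ⟨hw1, hw2⟩ := hw
        have hd1 : d x ≤ d w := hKd x w hw2
        have hd2 : d w ≤ d y := hKd w y hw1.le
        refine Finset.mem_erase.mpr ⟨?_, ?_⟩
        · intro h'; rw [h'] at hw1; omega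
        · simp only [hS, mem_filter, mem_univ, true_and]; omega
      have hFsub : univ.filter (fun w => Kf w < Kf x) ⊆ univ.filter (fun w => Kf w < Kf y) := by
        intro w hw
        simp only [mem_filter, mem_univ, true_and] at hw ⊢
        omega
      have hcard : f y = f x + #(univ.filter (fun w => Kf w < Kf y) \
          univ.filter (fun w => Kf w < Kf x)) := by
        simp only [hf]
        rw [Nat.add_comm, Finset.card_sdiff_add_card_eq_card hFsub]
      -- bound on |S|
      set T : Finset V := univ.filter (fun w => d w ≤ D ∧ d w ≠ d x ∧ d w ≠ d x + 1) with hT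
      have hdisj : Disjoint S T := by
        rw [Finset.disjoint_left]
        intro w hwS hwT
        simp only [hS, hT, mem_filter, mem_univ, true_and] at hwS hwT
        omega
      have hST : #S + #T ≤ n := by
        rw [← Finset.card_union_of_disjoint hdisj]
        exact le_trans (Finset.card_le_card (Finset.subset_univ _)) (le_of_eq rfl)
      set J : Finset ℕ := ((Finset.range (D + 1)).erase (d x)).erase (d x + 1) with hJ
      have hJcard : D - 1 ≤ #J := by
        have h1 : #(Finset.range (D + 1)) = D + 1 := Finset.card_range _
        have h2 := Finset.pred_card_le_card_erase
          (s := Finset.range (D + 1)) (a := d x)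
        have h3 := Finset.pred_card_le_card_erase
          (s := (Finset.range (D + 1)).erase (d x)) (a := d x + 1)
        simp only [hJ]; omega
      have hsurj : Set.SurjOn d ↑T ↑J := by
        intro j hj
        simp only [hJ, Finset.coe_erase, Set.mem_diff, Finset.mem_coe,
          Finset.mem_erase, Finset.mem_range, Set.mem_singleton_iff] at hj
        have hjD : j ≤ D := by
          rcases hj with ⟨⟨_, hr⟩, _⟩
          omega
        have hjx : j ≠ d x := by tauto
        have hjx1 : j ≠ d x + 1 := by tauto
        obtain ⟨w, hw⟩ := exists_dist_eq_of_le_aux hG u v (by omega : j ≤ G.dist u v)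
        have hw' : d w = j := by simp only [hd]; exact hw
        refine ⟨w, ?_, hw'⟩
        simp only [hT, Finset.coe_filter, Set.mem_setOf_eq, mem_univ, true_and]
        omega
      have hJT : #J ≤ #T := Finset.card_le_card_of_surjOn d hsurj
      have hScard : #S ≤ n - D + 1 := by omega
      have hdiff : #(univ.filter (fun w => Kf w < Kf y) \
          univ.filter (fun w => Kf w < Kf x)) ≤ #S - 1 := by
        calc _ ≤ #(S.erase y) := Finset.card_le_card hsub
        _ = #S - 1 := Finset.card_erase_of_mem hyS
      have hS1 : 1 ≤ #S := Finset.card_pos.mpr ⟨y, hyS⟩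
      omega
  exact pthin_le_of_bandwidth G hb hfinj hband
end

section
/- Let G be a graph, Π = {V^1,...,V^k} a partition of V(G), and < a partial order on V(G) that is a total order consistent with Π when restricted to each V^j. Define the digraph D(G,Π,<) on V(G) with arcs: (1) v_i -> v_j for v_i in V^i, v_j in V^j, i ≠ j, whenever v_i v_j is not an edge of G and there exists v_j' in V^j with v_j' < v_j and v_i v_j' an edge of G; and (2) v -> v' whenever v < v'. Then a total ordering of V(G) is consistent with Π and extends < if and only if it is a topological ordering of D(G,Π,<). -/
/-- The arcs of the digraph `D(G, Π, <)`: `u → v` if `u < v`, or if `u, v` lie in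
different classes, `uv` is a non-edge, and some `w` in the class of `v` with `w < v`
is adjacent to `u`. -/
def DArc {V : Type*} {k : ℕ} (G : SimpleGraph V) (c : V → Fin k)
    (lt : V → V → Prop) (u v : V) : Prop :=
  lt u v ∨ (c u ≠ c v ∧ ¬ G.Adj u v ∧ ∃ w, c w = c v ∧ lt w v ∧ G.Adj u w)

/-- Let `Π` be a partition (given by `c`) and `<` (given by `lt`) a partial order on the
vertices that is total and consistent when restricted to each class. Then a total ordering
(given by an injective labeling `f`) is consistent with `Π` and extends `<` if and only if
it is a topological ordering of `D(G, Π, <)`. -/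
theorem consistent_extending_iff_topological {V : Type*} [Fintype V] {k : ℕ}
    (G : SimpleGraph V) (c : V → Fin k) (lt : V → V → Prop)
    (hirr : ∀ v, ¬ lt v v)
    (htrans : ∀ u v w, lt u v → lt v w → lt u w)
    (htot : ∀ u v, c u = c v → u ≠ v → lt u v ∨ lt v u)
    (hcons : ∀ u v w, c u = c v → c v = c w → lt u v → lt v w → G.Adj w u → G.Adj w v)
    (f : V → ℕ) (hf : Function.Injective f) :
    (ConsistentWith G f c ∧ ∀ u v, lt u v → f u < f v) ↔
      (∀ u v, DArc G c lt u v → f u < f v) := by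
  constructor
  · rintro ⟨hc, hext⟩ u v (h | ⟨hne, hnadj, w, hcw, hlw, hadj⟩)
    · exact hext u v h
    · by_contra hle
      have huv : u ≠ v := fun h => hne (h ▸ rfl)
      have hfv : f v < f u := lt_of_le_of_ne (not_lt.mp hle) (fun h => huv (hf h.symm))
      have hwv : f w < f v := hext w v hlw
      exact hnadj (hc w v u hwv hfv hcw hadj)
  · intro htop
    constructor
    · intro u v w huv hvw hcuv hadj
      by_contra hnadj
      by_cases hcw : c w = c v
      · have huv' : u ≠ v := fun h => absurd (h ▸ huv) (lt_irrefl _)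
        have hvw' : v ≠ w := fun h => absurd (h ▸ hvw) (lt_irrefl _)
        have h1 : lt u v := by
          rcases htot u v hcuv huv' with h | h
          · exact h
          · exact absurd (htop v u (Or.inl h)) (not_lt.mpr huv.le)
        have h2 : lt v w := by
          rcases htot v w hcw.symm hvw' with h | h
          · exact h
          · exact absurd (htop w v (Or.inl h)) (not_lt.mpr hvw.le)
        exact hnadj (hcons u v w hcuv hcw.symm h1 h2 hadj)
      · have h1 : lt u v := by
          have huv' : u ≠ v := fun h => absurd (h ▸ huv) (lt_irrefl _)
          rcases htot u v hcuv huv' with h | h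
          · exact h
          · exact absurd (htop v u (Or.inl h)) (not_lt.mpr huv.le)
        have : DArc G c lt w v := Or.inr ⟨fun h => hcw h, hnadj, u, hcuv, h1, hadj⟩
        exact absurd (htop w v this) (not_lt.mpr hvw.le)
    · intro u v h
      exact htop u v (Or.inl h)
end

section
/- Let G be a graph, Π = {V^1,...,V^k} a partition of V(G), and < a partial order on V(G) that is a total order strongly consistent with Π when restricted to each V^j. Define the digraph D̃(G,Π,<) on V(G) with arcs: (1) v_i -> v_j for v_i in V^i, v_j in V^j, i ≠ j, whenever v_i v_j is not an edge of G and either there exists v_j' in V^j with v_j' < v_j and v_i v_j' an edge of G, or there exists v_i' in V^i with v_i < v_i' and v_i' v_j an edge of G; and (2) v -> v' whenever v < v'. Then a total ordering of V(G) is strongly consistent with Π and extends < if and only if it is a topological ordering of D̃(G,Π,<). -/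
/-- The arcs of the digraph `D̃(G, Π, <)`: `u → v` if `u < v`, or if `u, v` lie in
different classes, `uv` is a non-edge, and either some `w` in the class of `v` with
`w < v` is adjacent to `u`, or some `w` in the class of `u` with `u < w` is adjacent
to `v`. -/
def DtArc {V : Type*} {k : ℕ} (G : SimpleGraph V) (c : V → Fin k)
    (lt : V → V → Prop) (u v : V) : Prop :=
  lt u v ∨ (c u ≠ c v ∧ ¬ G.Adj u v ∧
    ((∃ w, c w = c v ∧ lt w v ∧ G.Adj u w) ∨ (∃ w, c w = c u ∧ lt u w ∧ G.Adj w v)))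

/-- Let `Π` be a partition (given by `c`) and `<` (given by `lt`) a partial order that is
total and strongly consistent when restricted to each class. Then a total ordering (given
by an injective labeling `f`) is strongly consistent with `Π` and extends `<` if and only
if it is a topological ordering of `D̃(G, Π, <)`. -/
theorem strongly_consistent_extending_iff_topological {V : Type*} [Fintype V] {k : ℕ}
    (G : SimpleGraph V) (c : V → Fin k) (lt : V → V → Prop)
    (hirr : ∀ v, ¬ lt v v)
    (htrans : ∀ u v w, lt u v → lt v w → lt u w)
    (htot : ∀ u v, c u = c v → u ≠ v → lt u v ∨ lt v u)
    (hcons : ∀ u v w, c u = c v → c v = c w → lt u v → lt v w → G.Adj w u → G.Adj w v)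
    (hrcons : ∀ u v w, c u = c v → c v = c w → lt u v → lt v w → G.Adj u w → G.Adj u v)
    (f : V → ℕ) (hf : Function.Injective f) :
    (ConsistentWith G f c ∧ RevConsistentWith G f c ∧ ∀ u v, lt u v → f u < f v) ↔
      (∀ u v, DtArc G c lt u v → f u < f v) := by
  constructor
  · rintro ⟨hc, hrc, hext⟩ u v harc
    rcases harc with h | ⟨hne, hnadj, ⟨w, hcw, hlw, haw⟩ | ⟨w, hcw, hlw, haw⟩⟩
    · exact hext u v h
    · by_contra hle
      have huv : u ≠ v := fun h => hne (h ▸ rfl)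
      have hvu : f v < f u := lt_of_le_of_ne (not_lt.mp hle) (fun h => huv (hf h.symm))
      exact hnadj (hc w v u (hext w v hlw) hvu hcw haw)
    · by_contra hle
      have huv : u ≠ v := fun h => hne (h ▸ rfl)
      have hvu : f v < f u := lt_of_le_of_ne (not_lt.mp hle) (fun h => huv (hf h.symm))
      exact hnadj ((hrc v u w hvu (hext u w hlw) hcw.symm haw.symm).symm)
  · intro htop
    have hext : ∀ u v, lt u v → f u < f v := fun u v h => htop u v (Or.inl h)
    refine ⟨?_, ?_, hext⟩
    · intro u v w huv hvw hcuv hadj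
      by_contra hnadj
      have huvne : u ≠ v := fun h => (h ▸ huv).false
      have hluv : lt u v := by
        rcases htot u v hcuv huvne with h | h
        · exact h
        · exact absurd (hext v u h) (by omega)
      by_cases hcwv : c w = c v
      · have hvwne : v ≠ w := fun h => (h ▸ hvw).false
        have hlvw : lt v w := by
          rcases htot v w hcwv.symm hvwne with h | h
          · exact h
          · exact absurd (hext w v h) (by omega)
        exact hnadj (hcons u v w hcuv hcwv.symm hluv hlvw hadj)
      · have : DtArc G c lt w v :=
          Or.inr ⟨hcwv, hnadj, Or.inl ⟨u, hcuv, hluv, hadj⟩⟩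
        exact absurd (htop w v this) (by omega)
    · intro u v w huv hvw hcvw hadj
      by_contra hnadj
      have hvwne : v ≠ w := fun h => (h ▸ hvw).false
      have hlvw : lt v w := by
        rcases htot v w hcvw hvwne with h | h
        · exact h
        · exact absurd (hext w v h) (by omega)
      by_cases hcuv : c u = c v
      · have huvne : u ≠ v := fun h => (h ▸ huv).false
        have hluv : lt u v := by
          rcases htot u v hcuv huvne with h | h
          · exact h
          · exact absurd (hext v u h) (by omega)
        exact hnadj (hrcons u v w hcuv hcvw hluv hlvw hadj)
      · have : DtArc G c lt v u :=
          Or.inr ⟨fun h => hcuv h.symm, fun h => hnadj h.symm, Or.inr ⟨w, hcvw.symm, hlvw, hadj.symm⟩⟩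
        exact absurd (htop v u this) (by omega)
end

section
/- Every graph G with at least one edge satisfies thin(G) ≥ b_v(G)/Δ(G), where b_v(G) is the vertex isoperimetric peak and Δ(G) the maximum degree. Consequently, if G has maximum degree at most d and contains a (not necessarily induced) subgraph H with at least one edge and b_v(H) ≥ b, then thin(G) ≥ b/d. -/
/-- The thinness of `G`. -/
noncomputable def thin {V : Type*} (G : SimpleGraph V) : ℕ :=
  sInf {k | ∃ f : V → ℕ, Function.Injective f ∧ ∃ c : V → Fin k, ConsistentWith G f c}

/-- The vertex isoperimetric peak of `G`:
`b_v(G) = max_s min_{|X| = s} |N(X) ∩ (V ∖ X)|`. -/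
noncomputable def vertexIsoPeak {V : Type*} (G : SimpleGraph V) : ℕ :=
  sSup {m | ∃ s : ℕ, m = sInf {b | ∃ X : Set V, X.ncard = s ∧
    b = {v | v ∉ X ∧ ∃ u ∈ X, G.Adj u v}.ncard}}

/-- The maximum degree of `G`. -/
noncomputable def maxDeg {V : Type*} (G : SimpleGraph V) : ℕ :=
  sSup {d | ∃ v : V, d = (G.neighborSet v).ncard}

section Aux
variable {V : Type*} [Fintype V]

lemma ncard_le_card (S : Set V) : S.ncard ≤ Fintype.card V := by
  have := Set.ncard_le_ncard (Set.subset_univ S) (Set.toFinite (Set.univ : Set V))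
  rwa [Set.ncard_univ, Nat.card_eq_fintype_card] at this

lemma deg_le_maxDeg (G : SimpleGraph V) (v : V) : (G.neighborSet v).ncard ≤ maxDeg G := by
  apply le_csSup
  · exact ⟨Fintype.card V, by rintro d ⟨w, rfl⟩; exact ncard_le_card _⟩
  · exact ⟨v, rfl⟩

lemma prefix_exists (f : V → ℕ) (hf : Function.Injective f) :
    ∀ s : ℕ, s ≤ Fintype.card V →
      ∃ X : Set V, X.ncard = s ∧ ∀ v ∈ X, ∀ w ∉ X, f v < f w := by
  intro s
  induction s with
  | zero => exact fun _ => ⟨∅, by simp, by simp⟩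
  | succ s ih =>
    intro hs
    obtain ⟨X, hcard, hpre⟩ := ih (Nat.le_of_succ_le hs)
    have hXc : Xᶜ.Nonempty := by
      by_contra h
      rw [Set.not_nonempty_iff_eq_empty, Set.compl_empty_iff] at h
      rw [h, Set.ncard_univ, Nat.card_eq_fintype_card] at hcard
      omega
    have hXcfin : Xᶜ.Finite := Set.toFinite _
    obtain ⟨w, hw, hwmin⟩ :=
      Finset.exists_min_image hXcfin.toFinset f (by simpa using hXc)
    rw [Set.Finite.mem_toFinset] at hw
    refine ⟨insert w X, ?_, ?_⟩
    · rw [Set.ncard_insert_of_notMem hw (Set.toFinite _), hcard]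
    · intro v hv w' hw'
      have hw'X : w' ∉ X := fun h => hw' (Set.mem_insert_of_mem _ h)
      rcases hv with rfl | hvX
      · have hle : f v ≤ f w' := hwmin w' (by simpa [Set.Finite.mem_toFinset] using hw'X)
        have hne : f v ≠ f w' := fun h => hw' (by rw [hf h]; exact Set.mem_insert _ _)
        omega
      · exact hpre v hvX w' hw'X

lemma boundary_le (G : SimpleGraph V) {k : ℕ} {f : V → ℕ} {c : V → Fin k}
    (hf : Function.Injective f) (hc : ConsistentWith G f c) (X : Set V)
    (hX : ∀ v ∈ X, ∀ w ∉ X, f v < f w) :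
    {v | v ∉ X ∧ ∃ u ∈ X, G.Adj u v}.ncard ≤ k * maxDeg G := by
  classical
  by_cases hV : Nonempty V
  · set B := {v | v ∉ X ∧ ∃ u ∈ X, G.Adj u v} with hB
    have hXfin : X.Finite := Set.toFinite _
    have hmex : ∀ i : Fin k, ∃ v : V,
        (hXfin.toFinset.filter (fun x => c x = i)).Nonempty →
          v ∈ hXfin.toFinset.filter (fun x => c x = i) ∧
          ∀ x ∈ hXfin.toFinset.filter (fun x => c x = i), f x ≤ f v := by
      intro i
      by_cases h : (hXfin.toFinset.filter (fun x => c x = i)).Nonempty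
      · obtain ⟨v, hv1, hv2⟩ := Finset.exists_max_image _ f h
        exact ⟨v, fun _ => ⟨hv1, hv2⟩⟩
      · exact ⟨Classical.arbitrary V, fun h' => absurd h' h⟩
    choose m hm using hmex
    have hcov : ∀ w ∈ B, ∃ i : Fin k, w ∈ G.neighborSet (m i) := by
      rintro w ⟨hwX, u, huX, hadj⟩
      refine ⟨c u, ?_⟩
      have huF : u ∈ hXfin.toFinset.filter (fun x => c x = c u) :=
        Finset.mem_filter.mpr ⟨(Set.Finite.mem_toFinset _).mpr huX, rfl⟩
      obtain ⟨hvmem, hvmax⟩ := hm (c u) ⟨u, huF⟩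
      obtain ⟨hvX', hvc⟩ := Finset.mem_filter.mp hvmem
      have hvX : m (c u) ∈ X := (Set.Finite.mem_toFinset _).mp hvX'
      rcases eq_or_ne u (m (c u)) with he | huv
      · exact he ▸ hadj
      · have h1 : f u < f (m (c u)) := by
          have hle : f u ≤ f (m (c u)) := hvmax u huF
          have : f u ≠ f (m (c u)) := fun h => huv (hf h)
          omega
        have h2 : f (m (c u)) < f w := hX _ hvX w hwX
        exact ((hc u (m (c u)) w h1 h2 hvc.symm hadj.symm)).symm
    have hBfin : B.Finite := Set.toFinite _
    have hsub : hBfin.toFinset ⊆ Finset.univ.biUnion (fun i => G.neighborFinset (m i)) := by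
      intro w hw
      rw [Set.Finite.mem_toFinset] at hw
      obtain ⟨i, hi⟩ := hcov w hw
      exact Finset.mem_biUnion.mpr ⟨i, Finset.mem_univ _,
        by simpa [SimpleGraph.mem_neighborFinset] using hi⟩
    calc B.ncard = hBfin.toFinset.card := Set.ncard_eq_toFinset_card _ hBfin
      _ ≤ (Finset.univ.biUnion (fun i => G.neighborFinset (m i))).card :=
          Finset.card_le_card hsub
      _ ≤ ∑ i : Fin k, (G.neighborFinset (m i)).card := Finset.card_biUnion_le
      _ ≤ ∑ _i : Fin k, maxDeg G := by
          apply Finset.sum_le_sum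
          intro i _
          have h1 : (G.neighborFinset (m i)).card = (G.neighborSet (m i)).ncard := by
            rw [show (G.neighborFinset (m i)).card = G.degree (m i) from rfl,
              ← SimpleGraph.card_neighborSet_eq_degree, ← Nat.card_eq_fintype_card,
              Nat.card_coe_set_eq]
          rw [h1]
          exact deg_le_maxDeg G (m i)
      _ = k * maxDeg G := by simp [Finset.sum_const, mul_comm]
  · have : IsEmpty V := not_nonempty_iff.mp hV
    rw [Set.eq_empty_of_isEmpty {v | v ∉ X ∧ ∃ u ∈ X, G.Adj u v}]
    simp

lemma iso_le_mul (G : SimpleGraph V) {k : ℕ} {f : V → ℕ} {c : V → Fin k}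
    (hf : Function.Injective f) (hc : ConsistentWith G f c) :
    vertexIsoPeak G ≤ k * maxDeg G := by
  refine csSup_le ⟨sInf {b | ∃ X : Set V, X.ncard = 0 ∧
      b = {v | v ∉ X ∧ ∃ u ∈ X, G.Adj u v}.ncard}, ⟨0, rfl⟩⟩ ?_
  rintro m ⟨s, rfl⟩
  by_cases hT : {b | ∃ X : Set V, X.ncard = s ∧
      b = {v | v ∉ X ∧ ∃ u ∈ X, G.Adj u v}.ncard}.Nonempty
  · obtain ⟨b0, hb0⟩ := hT
    simp only [Set.mem_setOf_eq] at hb0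
    obtain ⟨X0, hX0, -⟩ := hb0
    have hs : s ≤ Fintype.card V := hX0 ▸ ncard_le_card X0
    obtain ⟨X, hXcard, hXpre⟩ := prefix_exists f hf s hs
    have hmem : {v | v ∉ X ∧ ∃ u ∈ X, G.Adj u v}.ncard ∈ {b | ∃ X : Set V, X.ncard = s ∧
        b = {v | v ∉ X ∧ ∃ u ∈ X, G.Adj u v}.ncard} := ⟨X, hXcard, rfl⟩
    exact le_trans (Nat.sInf_le hmem) (boundary_le G hf hc X hXpre)
  · rw [Set.not_nonempty_iff_eq_empty] at hT
    simp [hT]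

lemma thin_set_nonempty (G : SimpleGraph V) :
    {k | ∃ f : V → ℕ, Function.Injective f ∧ ∃ c : V → Fin k, ConsistentWith G f c}.Nonempty := by
  refine ⟨Fintype.card V, fun v => (Fintype.equivFin V v).val, ?_, Fintype.equivFin V, ?_⟩
  · intro a b h
    exact (Fintype.equivFin V).injective (Fin.val_injective h)
  · intro u v w h1 h2 h3 _
    exfalso
    have : u = v := (Fintype.equivFin V).injective h3
    subst this
    omega

lemma iso_le_thin_mul (G : SimpleGraph V) : vertexIsoPeak G ≤ thin G * maxDeg G := by
  obtain ⟨f, hf, c, hc⟩ := Nat.sInf_mem (thin_set_nonempty G)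
  exact iso_le_mul G hf hc

end Aux

section Part2
variable {V : Type*} [Fintype V]

lemma thin_comap_le (G : SimpleGraph V) {W : Type*} (φ : W ↪ V) :
    thin (G.comap ⇑φ) ≤ thin G := by
  obtain ⟨f, hf, c, hc⟩ := Nat.sInf_mem (thin_set_nonempty G)
  apply Nat.sInf_le
  exact ⟨f ∘ φ, hf.comp φ.injective, c ∘ φ,
    fun u v w h1 h2 h3 hadj => hc (φ u) (φ v) (φ w) h1 h2 h3 hadj⟩

lemma maxDeg_comap_le (G : SimpleGraph V) {W : Type*} [Fintype W] (φ : W ↪ V) :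
    maxDeg (G.comap ⇑φ) ≤ maxDeg G := by
  by_cases hW : Nonempty W
  · refine csSup_le ⟨((G.comap ⇑φ).neighborSet (Classical.arbitrary W)).ncard,
      ⟨Classical.arbitrary W, rfl⟩⟩ ?_
    rintro d ⟨a, rfl⟩
    have himg : ⇑φ '' ((G.comap ⇑φ).neighborSet a) ⊆ G.neighborSet (φ a) := by
      rintro _ ⟨b, hb, rfl⟩
      exact hb
    have h1 := Set.ncard_le_ncard himg (Set.toFinite _)
    rw [Set.ncard_image_of_injective _ φ.injective] at h1
    exact le_trans h1 (deg_le_maxDeg G (φ a))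
  · haveI : IsEmpty W := not_nonempty_iff.mp hW
    have he : {d | ∃ v : W, d = ((G.comap ⇑φ).neighborSet v).ncard} = ∅ := by
      rw [Set.eq_empty_iff_forall_notMem]
      rintro d ⟨v, -⟩
      exact IsEmpty.elim ‹IsEmpty W› v
    show sSup _ ≤ _
    rw [he, csSup_empty]
    exact Nat.zero_le _

lemma iso_bdd {W : Type*} [Fintype W] (H : SimpleGraph W) :
    BddAbove {m | ∃ s : ℕ, m = sInf {b | ∃ X : Set W, X.ncard = s ∧
      b = {v | v ∉ X ∧ ∃ u ∈ X, H.Adj u v}.ncard}} := by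
  refine ⟨Fintype.card W, ?_⟩
  rintro m ⟨s, rfl⟩
  by_cases hT : {b | ∃ X : Set W, X.ncard = s ∧
      b = {v | v ∉ X ∧ ∃ u ∈ X, H.Adj u v}.ncard}.Nonempty
  · obtain ⟨X, -, hb⟩ := Nat.sInf_mem hT
    rw [hb]
    exact ncard_le_card _
  · rw [Set.not_nonempty_iff_eq_empty] at hT
    simp [hT]

lemma iso_mono {W : Type*} [Fintype W] {H H' : SimpleGraph W}
    (h : ∀ a b, H.Adj a b → H'.Adj a b) : vertexIsoPeak H ≤ vertexIsoPeak H' := by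
  refine csSup_le ⟨sInf {b | ∃ X : Set W, X.ncard = 0 ∧
      b = {v | v ∉ X ∧ ∃ u ∈ X, H.Adj u v}.ncard}, ⟨0, rfl⟩⟩ ?_
  rintro m ⟨s, rfl⟩
  refine le_trans ?_ (le_csSup (iso_bdd H') ⟨s, rfl⟩)
  by_cases hT' : {b | ∃ X : Set W, X.ncard = s ∧
      b = {v | v ∉ X ∧ ∃ u ∈ X, H'.Adj u v}.ncard}.Nonempty
  · obtain ⟨X, hXc, hXb⟩ := Nat.sInf_mem hT'
    have hmem : {v | v ∉ X ∧ ∃ u ∈ X, H.Adj u v}.ncard ∈ {b | ∃ X : Set W, X.ncard = s ∧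
        b = {v | v ∉ X ∧ ∃ u ∈ X, H.Adj u v}.ncard} := ⟨X, hXc, rfl⟩
    refine le_trans (Nat.sInf_le hmem) ?_
    rw [hXb]
    refine Set.ncard_le_ncard ?_ (Set.toFinite _)
    rintro v ⟨hv, u, hu, hadj⟩
    exact ⟨hv, u, hu, h _ _ hadj⟩
  · have hT : {b | ∃ X : Set W, X.ncard = s ∧
        b = {v | v ∉ X ∧ ∃ u ∈ X, H.Adj u v}.ncard} = ∅ := by
      rw [Set.eq_empty_iff_forall_notMem]
      rintro b ⟨X, hXc, -⟩
      exact hT' ⟨_, X, hXc, rfl⟩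
    rw [Set.not_nonempty_iff_eq_empty] at hT'
    simp [hT, hT']

end Part2

/-- Every graph `G` with at least one edge satisfies `thin(G) ≥ b_v(G)/Δ(G)`.
Consequently, if `G` has maximum degree at most `d` and contains a (not necessarily
induced) subgraph `H` with at least one edge and `b_v(H) ≥ b`, then `thin(G) ≥ b/d`. -/
theorem thin_ge_iso_peak_div_maxDeg {V : Type*} [Fintype V] (G : SimpleGraph V) :
    ((∃ u v : V, G.Adj u v) →
      (vertexIsoPeak G : ℝ) / (maxDeg G : ℝ) ≤ (thin G : ℝ)) ∧
    (∀ (W : Type) (_ : Fintype W) (H : SimpleGraph W) (φ : W ↪ V),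
      (∀ a b : W, H.Adj a b → G.Adj (φ a) (φ b)) →
      (∃ a b : W, H.Adj a b) →
      ∀ d b : ℕ, maxDeg G ≤ d → b ≤ vertexIsoPeak H →
        (b : ℝ) / (d : ℝ) ≤ (thin G : ℝ)) := by
  constructor
  · rintro ⟨u, v, huv⟩
    have hΔ : 1 ≤ maxDeg G :=
      le_trans ((Set.ncard_pos (Set.toFinite _)).mpr ⟨v, huv⟩) (deg_le_maxDeg G u)
    have hΔR : (0 : ℝ) < (maxDeg G : ℝ) := by exact_mod_cast hΔ
    rw [div_le_iff₀ hΔR]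
    exact_mod_cast iso_le_thin_mul G
  · intro W hW H φ hφ hedge d b hd hb
    haveI := hW
    obtain ⟨a, a', haa⟩ := hedge
    have h1 : vertexIsoPeak H ≤ vertexIsoPeak (G.comap ⇑φ) :=
      iso_mono (fun x y h => hφ x y h)
    have h2 : vertexIsoPeak (G.comap ⇑φ) ≤ thin (G.comap ⇑φ) * maxDeg (G.comap ⇑φ) :=
      iso_le_thin_mul _
    have h3 : thin (G.comap ⇑φ) ≤ thin G := thin_comap_le G φ
    have h4 : maxDeg (G.comap ⇑φ) ≤ maxDeg G := maxDeg_comap_le G φ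
    have hd1 : 1 ≤ d :=
      le_trans (le_trans ((Set.ncard_pos (Set.toFinite _)).mpr ⟨φ a', hφ a a' haa⟩)
        (deg_le_maxDeg G (φ a))) hd
    have hmain : b ≤ thin G * d :=
      calc b ≤ vertexIsoPeak H := hb
        _ ≤ thin (G.comap ⇑φ) * maxDeg (G.comap ⇑φ) := le_trans h1 h2
        _ ≤ thin G * d := Nat.mul_le_mul h3 (le_trans h4 hd)
    have hdR : (0 : ℝ) < (d : ℝ) := by exact_mod_cast hd1
    rw [div_le_iff₀ hdR]
    exact_mod_cast hmain
end

section
/- The class of B_0-VPG graphs (intersection graphs of horizontal and vertical segments in the plane) has unbounded thinness: for every r ≥ 2 there is a B_0-VPG graph of maximum degree 6 containing the r×r grid as a subgraph, hence with thinness at least r/6. -/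
/-- An axis-parallel (horizontal or vertical) segment in the plane. -/
def IsAxisSegment (S : Set (ℝ × ℝ)) : Prop :=
  (∃ x a b : ℝ, a ≤ b ∧ S = {p | p.1 = x ∧ p.2 ∈ Set.Icc a b}) ∨
  (∃ y a b : ℝ, a ≤ b ∧ S = {p | p.2 = y ∧ p.1 ∈ Set.Icc a b})

/-- The `r × r` grid graph: vertices `(i, j)` with edges between vertices at
Manhattan distance 1. -/
def gridGraph (r : ℕ) : SimpleGraph (Fin r × Fin r) where
  Adj p q := ((p.1.val : ℤ) - q.1.val).natAbs + ((p.2.val : ℤ) - q.2.val).natAbs = 1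
  symm := by
    constructor
    intro p q h
    omega
  loopless := by constructor; intro p h; simp at h


section Aux

open Finset

open scoped Classical

instance gridAdjDec (r : ℕ) : DecidableRel (gridGraph r).Adj := fun p q =>
  inferInstanceAs (Decidable ((((p.1.val : ℤ) - q.1.val).natAbs + ((p.2.val : ℤ) - q.2.val).natAbs) = 1))

/-- Each grid vertex has at most 4 neighbors. -/
lemma grid_deg_le (r : ℕ) (w : Fin r × Fin r) :
    (univ.filter fun u => (gridGraph r).Adj w u).card ≤ 4 := by
  have h4 : (univ : Finset (Bool × Bool)).card = 4 := by simp
  rw [← h4]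
  apply Finset.card_le_card_of_injOn
    (fun u => (decide (u.1.val = w.1.val), decide (u.1.val + u.2.val < w.1.val + w.2.val)))
  · intro a _; exact Finset.mem_univ _
  · intro u hu v hv h
    simp only [Finset.coe_filter, Set.mem_setOf_eq] at hu hv
    have hu' : (((w.1.val : ℤ) - u.1.val).natAbs + ((w.2.val : ℤ) - u.2.val).natAbs) = 1 := hu.2
    have hv' : (((w.1.val : ℤ) - v.1.val).natAbs + ((w.2.val : ℤ) - v.2.val).natAbs) = 1 := hv.2
    have h1 : (u.1.val = w.1.val) ↔ (v.1.val = w.1.val) := by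
      have := congrArg Prod.fst h; simpa [decide_eq_decide] using this
    have h2 : (u.1.val + u.2.val < w.1.val + w.2.val) ↔ (v.1.val + v.2.val < w.1.val + w.2.val) := by
      have := congrArg Prod.snd h; simpa [decide_eq_decide] using this
    have e1 : u.1.val = v.1.val := by omega
    have e2 : u.2.val = v.2.val := by omega
    exact Prod.ext (Fin.ext e1) (Fin.ext e2)

/-- The boundary of any prefix (w.r.t. `f`) uses at most 4 vertices per class. -/
lemma boundary_le_s11 (r k t : ℕ) (f : Fin r × Fin r → ℕ) (hf : Function.Injective f)
    (c : Fin r × Fin r → Fin k) (hc : ConsistentWith (gridGraph r) f c) :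
    (univ.filter fun u => f u < t ∧ ∃ w, ¬ f w < t ∧ (gridGraph r).Adj w u).card ≤ 4 * k := by
  set B := univ.filter fun u : Fin r × Fin r => f u < t ∧ ∃ w, ¬ f w < t ∧ (gridGraph r).Adj w u
    with hB
  have hcard : B.card = ∑ q : Fin k, (B.filter fun u => c u = q).card :=
    Finset.card_eq_sum_card_fiberwise (fun x _ => Finset.mem_univ (c x))
  have hfib : ∀ q : Fin k, (B.filter fun u => c u = q).card ≤ 4 := by
    intro q
    by_cases hne : (B.filter fun u => c u = q).Nonempty
    · obtain ⟨u₀, hu₀, hmin⟩ := Finset.exists_min_image _ f hne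
      have hu₀' := Finset.mem_filter.mp hu₀
      have hu₀B := Finset.mem_filter.mp hu₀'.1
      obtain ⟨hu₀t, w₀, hw₀t, hadj₀⟩ := hu₀B.2
      have hsub : (B.filter fun u => c u = q) ⊆ univ.filter fun u => (gridGraph r).Adj w₀ u := by
        intro u hu
        have hu' := Finset.mem_filter.mp hu
        have huB := Finset.mem_filter.mp hu'.1
        obtain ⟨hut, _⟩ := huB.2
        rw [Finset.mem_filter]
        refine ⟨Finset.mem_univ _, ?_⟩
        by_cases he : u = u₀
        · rw [he]; exact hadj₀
        · have hle : f u₀ ≤ f u := hmin u hu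
          have hlt : f u₀ < f u := lt_of_le_of_ne hle (fun h => he (hf h.symm))
          exact hc u₀ u w₀ hlt (by omega) (hu₀'.2.trans hu'.2.symm) hadj₀
      exact le_trans (Finset.card_le_card hsub) (grid_deg_le r w₀)
    · rw [Finset.not_nonempty_iff_eq_empty.mp hne]; simp
  calc B.card = ∑ q : Fin k, (B.filter fun u => c u = q).card := hcard
    _ ≤ ∑ _q : Fin k, 4 := Finset.sum_le_sum fun q _ => hfib q
    _ = 4 * k := by simp [mul_comm]

lemma stepdown (g : ℕ → Prop) [DecidablePred g] (a b : ℕ) (hab : a ≤ b) (ha : g a) (hb : ¬ g b) :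
    ∃ m, a ≤ m ∧ m + 1 ≤ b ∧ g m ∧ ¬ g (m + 1) := by
  have hex : ∃ n, a ≤ n ∧ ¬ g n := ⟨b, hab, hb⟩
  have hspec := Nat.find_spec hex
  have hle : Nat.find hex ≤ b := Nat.find_min' hex ⟨hab, hb⟩
  have hgt : a < Nat.find hex := by
    rcases Nat.lt_or_ge a (Nat.find hex) with h | h
    · exact h
    · exact absurd ha (by
        have : Nat.find hex = a := le_antisymm (by omega) hspec.1
        rw [← this]; exact hspec.2)
  refine ⟨Nat.find hex - 1, by omega, by omega, ?_, ?_⟩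
  · by_contra hgm
    have := Nat.find_min hex (m := Nat.find hex - 1) (by omega)
    exact this ⟨by omega, hgm⟩
  · have : Nat.find hex - 1 + 1 = Nat.find hex := by omega
    rw [this]; exact hspec.2

lemma boundary_pair (g : ℕ → Prop) [DecidablePred g] (a b : ℕ) (ha : g a) (hb : ¬ g b) :
    ∃ m, m + 1 ≤ max a b ∧ ((g m ∧ ¬ g (m + 1)) ∨ (¬ g m ∧ g (m + 1))) := by
  rcases Nat.lt_or_ge a b with h | h
  · obtain ⟨m, h1, h2, h3, h4⟩ := stepdown g a b (le_of_lt h) ha hb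
    exact ⟨m, by omega, Or.inl ⟨h3, h4⟩⟩
  · obtain ⟨m, h1, h2, h3, h4⟩ := stepdown (fun n => ¬ g n) b a h hb (not_not_intro ha)
    exact ⟨m, by omega, Or.inr ⟨h3, not_not.mp h4⟩⟩

/-- Extension of `f` to `ℕ × ℕ`. -/
def Fext (r : ℕ) (f : Fin r × Fin r → ℕ) (x y : ℕ) : ℕ :=
  if h : x < r ∧ y < r then f (⟨x, h.1⟩, ⟨y, h.2⟩) else 0

lemma Fext_eq (r : ℕ) (f : Fin r × Fin r → ℕ) (x y : ℕ) (hx : x < r) (hy : y < r) :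
    Fext r f x y = f (⟨x, hx⟩, ⟨y, hy⟩) := dif_pos ⟨hx, hy⟩

/-- A column that meets a prefix and its complement contains a boundary vertex. -/
lemma col_boundary {r t : ℕ} (f : Fin r × Fin r → ℕ) (j a b : Fin r)
    (ha : f (a, j) < t) (hb : ¬ f (b, j) < t) :
    ∃ u : Fin r × Fin r, u.2 = j ∧ f u < t ∧ ∃ w, ¬ f w < t ∧ (gridGraph r).Adj w u := by
  obtain ⟨m, hm1, hcase⟩ :=
    boundary_pair (fun m => Fext r f m j.val < t) a.val b.val
      (by simpa [Fext_eq r f a.val j.val a.isLt j.isLt] using ha)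
      (by simpa [Fext_eq r f b.val j.val b.isLt j.isLt] using hb)
  have hmr : m + 1 < r := lt_of_le_of_lt hm1 (max_lt a.isLt b.isLt)
  have hm0 : m < r := by omega
  rw [Fext_eq r f m j.val hm0 j.isLt, Fext_eq r f (m+1) j.val hmr j.isLt] at hcase
  have hadj1 : (gridGraph r).Adj (⟨m+1, hmr⟩, j) (⟨m, hm0⟩, j) := by
    show ((((m+1 : ℕ) : ℤ) - (m : ℕ)).natAbs + ((j.val : ℤ) - j.val).natAbs) = 1
    omega
  have hadj2 : (gridGraph r).Adj (⟨m, hm0⟩, j) (⟨m+1, hmr⟩, j) := hadj1.symm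
  rcases hcase with ⟨h1, h2⟩ | ⟨h1, h2⟩
  · exact ⟨(⟨m, hm0⟩, j), rfl, h1, (⟨m+1, hmr⟩, j), h2, hadj1⟩
  · exact ⟨(⟨m+1, hmr⟩, j), rfl, h2, (⟨m, hm0⟩, j), h1, hadj2⟩

/-- A row that meets a prefix and its complement contains a boundary vertex. -/
lemma row_boundary {r t : ℕ} (f : Fin r × Fin r → ℕ) (i a b : Fin r)
    (ha : f (i, a) < t) (hb : ¬ f (i, b) < t) :
    ∃ u : Fin r × Fin r, u.1 = i ∧ f u < t ∧ ∃ w, ¬ f w < t ∧ (gridGraph r).Adj w u := by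
  obtain ⟨m, hm1, hcase⟩ :=
    boundary_pair (fun m => Fext r f i.val m < t) a.val b.val
      (by simpa [Fext_eq r f i.val a.val i.isLt a.isLt] using ha)
      (by simpa [Fext_eq r f i.val b.val i.isLt b.isLt] using hb)
  have hmr : m + 1 < r := lt_of_le_of_lt hm1 (max_lt a.isLt b.isLt)
  have hm0 : m < r := by omega
  rw [Fext_eq r f i.val m i.isLt hm0, Fext_eq r f i.val (m+1) i.isLt hmr] at hcase
  have hadj1 : (gridGraph r).Adj (i, ⟨m+1, hmr⟩) (i, ⟨m, hm0⟩) := by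
    show (((i.val : ℤ) - i.val).natAbs + (((m+1 : ℕ) : ℤ) - (m : ℕ)).natAbs) = 1
    omega
  have hadj2 : (gridGraph r).Adj (i, ⟨m, hm0⟩) (i, ⟨m+1, hmr⟩) := hadj1.symm
  rcases hcase with ⟨h1, h2⟩ | ⟨h1, h2⟩
  · exact ⟨(i, ⟨m, hm0⟩), rfl, h1, (i, ⟨m+1, hmr⟩), h2, hadj1⟩
  · exact ⟨(i, ⟨m+1, hmr⟩), rfl, h2, (i, ⟨m, hm0⟩), h1, hadj2⟩

/-- Any consistent ordering/partition of the grid needs at least `r/4` classes. -/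
lemma grid_lb (r k : ℕ) (hr : 2 ≤ r) (f : Fin r × Fin r → ℕ) (hf : Function.Injective f)
    (c : Fin r × Fin r → Fin k) (hc : ConsistentWith (gridGraph r) f c) : r ≤ 4 * k := by
  have h0r : 0 < r := by omega
  have h1r : 1 < r := hr
  have hex : ∃ t, ∀ i : Fin r, ∃ j : Fin r, f (i, j) < t := by
    refine ⟨(Finset.univ.sup f) + 1, fun i => ⟨⟨0, h0r⟩, ?_⟩⟩
    exact Nat.lt_succ_of_le (Finset.le_sup (Finset.mem_univ _))
  set t₀ := Nat.find hex with ht₀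
  have hP : ∀ i : Fin r, ∃ j : Fin r, f (i, j) < t₀ := Nat.find_spec hex
  have ht₀pos : 0 < t₀ := by
    rcases Nat.eq_zero_or_pos t₀ with h | h
    · obtain ⟨j, hj⟩ := hP ⟨0, h0r⟩; omega
    · exact h
  have hnot : ¬ ∀ i : Fin r, ∃ j : Fin r, f (i, j) < t₀ - 1 :=
    Nat.find_min hex (by omega)
  push_neg at hnot
  obtain ⟨ρ, hρ⟩ := hnot
  by_cases hfull : ∃ i : Fin r, ∀ j : Fin r, f (i, j) < t₀
  · obtain ⟨ρ', hρ'⟩ := hfull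
    obtain ⟨jρ, hjρ⟩ := hP ρ
    have hjρeq : f (ρ, jρ) = t₀ - 1 := by have := hρ jρ; omega
    have hρρ' : ρ' ≠ ρ := by
      intro hEq; subst hEq
      have h0 : f (ρ', ⟨0, h0r⟩) = t₀ - 1 := by have := hρ' ⟨0, h0r⟩; have := hρ ⟨0, h0r⟩; omega
      have h1 : f (ρ', ⟨1, h1r⟩) = t₀ - 1 := by have := hρ' ⟨1, h1r⟩; have := hρ ⟨1, h1r⟩; omega
      have : ((ρ', (⟨0, h0r⟩ : Fin r)) : Fin r × Fin r) = (ρ', ⟨1, h1r⟩) :=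
        hf (h0.trans h1.symm)
      simp [Fin.ext_iff] at this
    have hρ'lt : ∀ j : Fin r, f (ρ', j) < t₀ - 1 := by
      intro j
      have hlt : f (ρ', j) < t₀ := hρ' j
      have hneq : f (ρ', j) ≠ t₀ - 1 := by
        intro hEq
        have : ((ρ', j) : Fin r × Fin r) = (ρ, jρ) := hf (hEq.trans hjρeq.symm)
        exact hρρ' (congrArg Prod.fst this)
      omega
    have hcol : ∀ j : Fin r, ∃ u : Fin r × Fin r, u.2 = j ∧ f u < t₀ - 1 ∧
        ∃ w, ¬ f w < t₀ - 1 ∧ (gridGraph r).Adj w u :=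
      fun j => col_boundary f j ρ' ρ (hρ'lt j) (by have := hρ j; omega)
    choose g hg2 hg1 hgw using hcol
    have hr' : r ≤ (Finset.univ.filter fun u => f u < t₀ - 1 ∧
        ∃ w, ¬ f w < t₀ - 1 ∧ (gridGraph r).Adj w u).card := by
      refine le_trans (le_of_eq (by simp : r = (Finset.univ : Finset (Fin r)).card)) ?_
      apply Finset.card_le_card_of_injOn g
      · intro j _
        exact Finset.mem_filter.mpr ⟨Finset.mem_univ _, hg1 j, hgw j⟩
      · intro j1 _ j2 _ hEq
        rw [← hg2 j1, ← hg2 j2, hEq]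
    exact le_trans hr' (boundary_le_s11 r k (t₀ - 1) f hf c hc)
  · push_neg at hfull
    have hrow : ∀ i : Fin r, ∃ u : Fin r × Fin r, u.1 = i ∧ f u < t₀ ∧
        ∃ w, ¬ f w < t₀ ∧ (gridGraph r).Adj w u := by
      intro i
      obtain ⟨ja, hja⟩ := hP i
      obtain ⟨jb, hjb⟩ := hfull i
      exact row_boundary f i ja jb hja (by omega)
    choose g hg2 hg1 hgw using hrow
    have hr' : r ≤ (Finset.univ.filter fun u => f u < t₀ ∧
        ∃ w, ¬ f w < t₀ ∧ (gridGraph r).Adj w u).card := by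
      refine le_trans (le_of_eq (by simp : r = (Finset.univ : Finset (Fin r)).card)) ?_
      apply Finset.card_le_card_of_injOn g
      · intro i _
        exact Finset.mem_filter.mpr ⟨Finset.mem_univ _, hg1 i, hgw i⟩
      · intro i1 _ i2 _ hEq
        rw [← hg2 i1, ← hg2 i2, hEq]
    exact le_trans hr' (boundary_le_s11 r k t₀ f hf c hc)

def sg (n : ℕ) : ℤ := if n % 4 ≤ 1 then 1 else -1

lemma sg_spec (n : ℕ) : (n % 4 ≤ 1 ∧ sg n = 1) ∨ (1 < n % 4 ∧ sg n = -1) := by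
  unfold sg; split
  · exact Or.inl ⟨by omega, rfl⟩
  · exact Or.inr ⟨by omega, rfl⟩

/-- Segment representation of the grid. -/
def segOf (r : ℕ) (v : Fin r × Fin r) : Set (ℝ × ℝ) :=
  if (v.1.val + v.2.val) % 2 = 0 then
    {p | p.2 = ((4 * (v.2.val : ℤ) + sg v.1.val : ℤ) : ℝ) ∧
         p.1 ∈ Set.Icc ((4 * (v.1.val : ℤ) - 5 : ℤ) : ℝ) ((4 * (v.1.val : ℤ) + 5 : ℤ) : ℝ)}
  else
    {p | p.1 = ((4 * (v.1.val : ℤ) + sg v.2.val : ℤ) : ℝ) ∧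
         p.2 ∈ Set.Icc ((4 * (v.2.val : ℤ) - 5 : ℤ) : ℝ) ((4 * (v.2.val : ℤ) + 5 : ℤ) : ℝ)}

lemma segOf_axis (r : ℕ) (v : Fin r × Fin r) : IsAxisSegment (segOf r v) := by
  unfold segOf IsAxisSegment
  split
  · exact Or.inr ⟨_, _, _, Int.cast_le.mpr (by omega), rfl⟩
  · exact Or.inl ⟨_, _, _, Int.cast_le.mpr (by omega), rfl⟩

lemma seg_iff (r : ℕ) (u v : Fin r × Fin r) :
    (gridGraph r).Adj u v ↔ u ≠ v ∧ (segOf r u ∩ segOf r v).Nonempty := by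
  constructor
  · intro h
    have hadj : (((u.1.val : ℤ) - v.1.val).natAbs + ((u.2.val : ℤ) - v.2.val).natAbs) = 1 := h
    refine ⟨h.ne, ?_⟩
    by_cases hu : (u.1.val + u.2.val) % 2 = 0
    · have hv : ¬ ((v.1.val + v.2.val) % 2 = 0) := by omega
      rw [segOf, if_pos hu, segOf, if_neg hv]
      refine ⟨(((4 * (v.1.val : ℤ) + sg v.2.val : ℤ) : ℝ),
              ((4 * (u.2.val : ℤ) + sg u.1.val : ℤ) : ℝ)), ⟨rfl, ?_, ?_⟩, rfl, ?_, ?_⟩ <;>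
      · refine Int.cast_le.mpr ?_
        rcases sg_spec u.1.val with ⟨h1, h2⟩ | ⟨h1, h2⟩ <;>
          rcases sg_spec v.2.val with ⟨h3, h4⟩ | ⟨h3, h4⟩ <;> omega
    · have hv : (v.1.val + v.2.val) % 2 = 0 := by omega
      rw [segOf, if_neg hu, segOf, if_pos hv]
      refine ⟨(((4 * (u.1.val : ℤ) + sg u.2.val : ℤ) : ℝ),
              ((4 * (v.2.val : ℤ) + sg v.1.val : ℤ) : ℝ)), ⟨rfl, ?_, ?_⟩, rfl, ?_, ?_⟩ <;>
      · refine Int.cast_le.mpr ?_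
        rcases sg_spec u.2.val with ⟨h1, h2⟩ | ⟨h1, h2⟩ <;>
          rcases sg_spec v.1.val with ⟨h3, h4⟩ | ⟨h3, h4⟩ <;> omega
  · rintro ⟨hne, p, hp1, hp2⟩
    have hne' : u.1.val ≠ v.1.val ∨ u.2.val ≠ v.2.val := by
      by_contra h
      push_neg at h
      exact hne (Prod.ext (Fin.ext h.1) (Fin.ext h.2))
    show (((u.1.val : ℤ) - v.1.val).natAbs + ((u.2.val : ℤ) - v.2.val).natAbs) = 1
    by_cases hu : (u.1.val + u.2.val) % 2 = 0 <;> by_cases hv : (v.1.val + v.2.val) % 2 = 0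
    · rw [segOf, if_pos hu] at hp1
      rw [segOf, if_pos hv] at hp2
      obtain ⟨hy1, hx1a, hx1b⟩ := hp1
      obtain ⟨hy2, hx2a, hx2b⟩ := hp2
      have hy : (4 * (u.2.val : ℤ) + sg u.1.val) = 4 * (v.2.val : ℤ) + sg v.1.val :=
        Int.cast_injective (hy1.symm.trans hy2)
      have hxa : (4 * (u.1.val : ℤ) - 5) ≤ 4 * (v.1.val : ℤ) + 5 :=
        Int.cast_le.mp (le_trans hx1a hx2b)
      have hxb : (4 * (v.1.val : ℤ) - 5) ≤ 4 * (u.1.val : ℤ) + 5 :=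
        Int.cast_le.mp (le_trans hx2a hx1b)
      exfalso
      rcases sg_spec u.1.val with ⟨h1, h2⟩ | ⟨h1, h2⟩ <;>
        rcases sg_spec v.1.val with ⟨h3, h4⟩ | ⟨h3, h4⟩ <;> omega
    · rw [segOf, if_pos hu] at hp1
      rw [segOf, if_neg hv] at hp2
      obtain ⟨hy1, hx1a, hx1b⟩ := hp1
      obtain ⟨hx2, hy2a, hy2b⟩ := hp2
      rw [hx2] at hx1a hx1b
      rw [hy1] at hy2a hy2b
      have e1 : (4 * (u.1.val : ℤ) - 5) ≤ 4 * (v.1.val : ℤ) + sg v.2.val := Int.cast_le.mp hx1a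
      have e2 : (4 * (v.1.val : ℤ) + sg v.2.val) ≤ 4 * (u.1.val : ℤ) + 5 := Int.cast_le.mp hx1b
      have e3 : (4 * (v.2.val : ℤ) - 5) ≤ 4 * (u.2.val : ℤ) + sg u.1.val := Int.cast_le.mp hy2a
      have e4 : (4 * (u.2.val : ℤ) + sg u.1.val) ≤ 4 * (v.2.val : ℤ) + 5 := Int.cast_le.mp hy2b
      rcases sg_spec u.1.val with ⟨h1, h2⟩ | ⟨h1, h2⟩ <;>
        rcases sg_spec v.2.val with ⟨h3, h4⟩ | ⟨h3, h4⟩ <;> omega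
    · rw [segOf, if_neg hu] at hp1
      rw [segOf, if_pos hv] at hp2
      obtain ⟨hx1, hy1a, hy1b⟩ := hp1
      obtain ⟨hy2, hx2a, hx2b⟩ := hp2
      rw [hx1] at hx2a hx2b
      rw [hy2] at hy1a hy1b
      have e1 : (4 * (v.1.val : ℤ) - 5) ≤ 4 * (u.1.val : ℤ) + sg u.2.val := Int.cast_le.mp hx2a
      have e2 : (4 * (u.1.val : ℤ) + sg u.2.val) ≤ 4 * (v.1.val : ℤ) + 5 := Int.cast_le.mp hx2b
      have e3 : (4 * (u.2.val : ℤ) - 5) ≤ 4 * (v.2.val : ℤ) + sg v.1.val := Int.cast_le.mp hy1a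
      have e4 : (4 * (v.2.val : ℤ) + sg v.1.val) ≤ 4 * (u.2.val : ℤ) + 5 := Int.cast_le.mp hy1b
      rcases sg_spec u.2.val with ⟨h1, h2⟩ | ⟨h1, h2⟩ <;>
        rcases sg_spec v.1.val with ⟨h3, h4⟩ | ⟨h3, h4⟩ <;> omega
    · rw [segOf, if_neg hu] at hp1
      rw [segOf, if_neg hv] at hp2
      obtain ⟨hx1, hy1a, hy1b⟩ := hp1
      obtain ⟨hx2, hy2a, hy2b⟩ := hp2
      have hx : (4 * (u.1.val : ℤ) + sg u.2.val) = 4 * (v.1.val : ℤ) + sg v.2.val :=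
        Int.cast_injective (hx1.symm.trans hx2)
      have hya : (4 * (u.2.val : ℤ) - 5) ≤ 4 * (v.2.val : ℤ) + 5 :=
        Int.cast_le.mp (le_trans hy1a hy2b)
      have hyb : (4 * (v.2.val : ℤ) - 5) ≤ 4 * (u.2.val : ℤ) + 5 :=
        Int.cast_le.mp (le_trans hy2a hy1b)
      exfalso
      rcases sg_spec u.2.val with ⟨h1, h2⟩ | ⟨h1, h2⟩ <;>
        rcases sg_spec v.2.val with ⟨h3, h4⟩ | ⟨h3, h4⟩ <;> omega

end Aux

/-- The class of `B₀`-VPG graphs (intersection graphs of horizontal and vertical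
segments in the plane) has unbounded thinness: for every `r ≥ 2` there is a `B₀`-VPG
graph of maximum degree at most 6 containing the `r × r` grid as a subgraph, hence with
thinness at least `r / 6`. -/

theorem b0vpg_unbounded_thinness :
    ∀ r : ℕ, 2 ≤ r →
      ∃ (V : Type) (_ : Fintype V) (G : SimpleGraph V),
        (∃ seg : V → Set (ℝ × ℝ), (∀ v, IsAxisSegment (seg v)) ∧
          ∀ u v : V, G.Adj u v ↔ u ≠ v ∧ (seg u ∩ seg v).Nonempty) ∧
        (∀ v : V, (G.neighborSet v).ncard ≤ 6) ∧
        (∃ φ : (Fin r × Fin r) ↪ V,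
          ∀ a b, (gridGraph r).Adj a b → G.Adj (φ a) (φ b)) ∧
        (r : ℝ) / 6 ≤ (thin G : ℝ) := by
  intro r hr
  classical
  refine ⟨Fin r × Fin r, inferInstance, gridGraph r, ?_, ?_, ?_, ?_⟩
  · exact ⟨segOf r, segOf_axis r, seg_iff r⟩
  · intro v
    have hset : (gridGraph r).neighborSet v =
        ↑(Finset.univ.filter fun u => (gridGraph r).Adj v u) := by
      ext u; simp [SimpleGraph.mem_neighborSet]
    rw [hset, Set.ncard_coe_finset]
    have := grid_deg_le r v
    omega
  · exact ⟨⟨id, fun a b h => h⟩, fun a b h => h⟩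
  · have hne : {k | ∃ f : Fin r × Fin r → ℕ, Function.Injective f ∧
        ∃ c : Fin r × Fin r → Fin k, ConsistentWith (gridGraph r) f c}.Nonempty := by
      refine ⟨r * r, fun v => (finProdFinEquiv v).val, ?_, finProdFinEquiv, ?_⟩
      · exact Fin.val_injective.comp finProdFinEquiv.injective
      · intro u v w h1 h2 h3 h4
        exact absurd h1 (by rw [finProdFinEquiv.injective h3]; omega)
    have hmem := Nat.sInf_mem hne
    obtain ⟨f, hf, c, hc⟩ := hmem
    have hlb : r ≤ 4 * thin (gridGraph r) := grid_lb r _ hr f hf c hc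
    rw [div_le_iff₀ (by norm_num : (0:ℝ) < 6)]
    have : (r : ℕ) ≤ thin (gridGraph r) * 6 := by omega
    exact_mod_cast this
end

section
/- A graph is 2-thin if and only if it has a blocking 2-diagonal intersection model of axis-parallel rectangles in the plane. -/
/-- A graph is 2-thin if it admits a vertex ordering and a 2-class partition
consistent with it. -/
def TwoThin {V : Type*} (G : SimpleGraph V) : Prop :=
  ∃ f : V → ℕ, Function.Injective f ∧ ∃ c : V → Fin 2, ConsistentWith G f c

/-- An axis-parallel box `[x1, x2] × [y1, y2]`, given by its coordinates. -/
structure Box where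
  x1 : ℝ
  x2 : ℝ
  y1 : ℝ
  y2 : ℝ

/-- The set of points of a box. -/
def Box.toSet (b : Box) : Set (ℝ × ℝ) := Set.Icc b.x1 b.x2 ×ˢ Set.Icc b.y1 b.y2

/-- The vertical prolongation `[x1, x2] × ℝ` of a box. -/
def Box.vert (b : Box) : Set (ℝ × ℝ) := Set.Icc b.x1 b.x2 ×ˢ (Set.univ : Set ℝ)

/-- The horizontal prolongation `ℝ × [y1, y2]` of a box. -/
def Box.horiz (b : Box) : Set (ℝ × ℝ) := (Set.univ : Set ℝ) ×ˢ Set.Icc b.y1 b.y2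

/-- A family of boxes is 2-diagonal with diagonals `y = x + d1` (lower) and
`y = x + d2` (upper), `d1 < 0 < d2`: the upper-right corners are pairwise distinct and
each lies either on the lower diagonal within the 4th quadrant or on the upper
diagonal within the 2nd quadrant. -/
def TwoDiagonal {V : Type*} (box : V → Box) (d1 d2 : ℝ) : Prop :=
  d1 < 0 ∧ 0 < d2 ∧
  (∀ u v : V, u ≠ v → ((box u).x2, (box u).y2) ≠ ((box v).x2, (box v).y2)) ∧
  ∀ v : V,
    ((box v).y2 = (box v).x2 + d1 ∧ 0 ≤ (box v).x2 ∧ (box v).y2 ≤ 0) ∨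
    ((box v).y2 = (box v).x2 + d2 ∧ (box v).x2 ≤ 0 ∧ 0 ≤ (box v).y2)

/-- A 2-diagonal family of boxes is blocking if for every two non-intersecting boxes
`b1` (corner on the upper diagonal) and `b2` (corner on the lower diagonal), either the
vertical prolongation of `b1` intersects `b2` or the horizontal prolongation of `b2`
intersects `b1`. -/
def Blocking {V : Type*} (box : V → Box) (d1 d2 : ℝ) : Prop :=
  ∀ u v : V, (box u).y2 = (box u).x2 + d2 → (box v).y2 = (box v).x2 + d1 →
    ¬ ((box u).toSet ∩ (box v).toSet).Nonempty →
    ((box u).vert ∩ (box v).toSet).Nonempty ∨ ((box v).horiz ∩ (box u).toSet).Nonempty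

/-- `box` is a box intersection model of `G`: the boxes are nondegenerate and two
distinct vertices are adjacent iff their boxes intersect. -/
def IsBoxModel {V : Type*} (G : SimpleGraph V) (box : V → Box) : Prop :=
  (∀ v : V, (box v).x1 ≤ (box v).x2 ∧ (box v).y1 ≤ (box v).y2) ∧
  ∀ u v : V, u ≠ v → (G.Adj u v ↔ ((box u).toSet ∩ (box v).toSet).Nonempty)

lemma box_inter_iff (B C : Box) :
    (B.toSet ∩ C.toSet).Nonempty ↔
      (max B.x1 C.x1 ≤ min B.x2 C.x2 ∧ max B.y1 C.y1 ≤ min B.y2 C.y2) := by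
  constructor
  · rintro ⟨⟨x, y⟩, hB, hC⟩
    simp only [Box.toSet, Set.mem_prod, Set.mem_Icc] at hB hC
    obtain ⟨⟨h1, h2⟩, h3, h4⟩ := hB
    obtain ⟨⟨h5, h6⟩, h7, h8⟩ := hC
    exact ⟨le_trans (max_le h1 h5) (le_min h2 h6), le_trans (max_le h3 h7) (le_min h4 h8)⟩
  · rintro ⟨hx, hy⟩
    refine ⟨(max B.x1 C.x1, max B.y1 C.y1), ?_, ?_⟩ <;>
      simp only [Box.toSet, Set.mem_prod, Set.mem_Icc] <;>
      exact ⟨⟨by simp, le_trans hx (by simp)⟩, by simp, le_trans hy (by simp)⟩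
  
lemma vert_inter_iff (B C : Box) :
    (B.vert ∩ C.toSet).Nonempty ↔
      (max B.x1 C.x1 ≤ min B.x2 C.x2 ∧ C.y1 ≤ C.y2) := by
  constructor
  · rintro ⟨⟨x, y⟩, hB, hC⟩
    simp only [Box.vert, Box.toSet, Set.mem_prod, Set.mem_Icc, Set.mem_univ, and_true] at hB hC
    obtain ⟨h1, h2⟩ := hB
    obtain ⟨⟨h5, h6⟩, h7, h8⟩ := hC
    exact ⟨le_trans (max_le h1 h5) (le_min h2 h6), le_trans h7 h8⟩
  · rintro ⟨hx, hy⟩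
    refine ⟨(max B.x1 C.x1, C.y1), ?_, ?_⟩ <;>
      simp only [Box.vert, Box.toSet, Set.mem_prod, Set.mem_Icc, Set.mem_univ, and_true]
    · exact ⟨by simp, le_trans hx (by simp)⟩
    · exact ⟨⟨by simp, le_trans hx (by simp)⟩, le_refl _, hy⟩

lemma horiz_inter_iff (B C : Box) :
    (B.horiz ∩ C.toSet).Nonempty ↔
      (max B.y1 C.y1 ≤ min B.y2 C.y2 ∧ C.x1 ≤ C.x2) := by
  constructor
  · rintro ⟨⟨x, y⟩, hB, hC⟩
    simp only [Box.horiz, Box.toSet, Set.mem_prod, Set.mem_Icc, Set.mem_univ, true_and] at hB hC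
    obtain ⟨h1, h2⟩ := hB
    obtain ⟨⟨h5, h6⟩, h7, h8⟩ := hC
    exact ⟨le_trans (max_le h1 h7) (le_min h2 h8), le_trans h5 h6⟩
  · rintro ⟨hy, hx⟩
    refine ⟨(C.x1, max B.y1 C.y1), ?_, ?_⟩ <;>
      simp only [Box.horiz, Box.toSet, Set.mem_prod, Set.mem_Icc, Set.mem_univ, true_and]
    · exact ⟨by simp, le_trans hy (by simp)⟩
    · exact ⟨⟨le_refl _, hx⟩, by simp, le_trans hy (by simp)⟩

section Forward
variable {V : Type*} [Fintype V] (G : SimpleGraph V) (f : V → ℕ) (c : V → Fin 2)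

open Classical in
noncomputable def earlierNbrs (k : Fin 2) (v : V) : Finset V :=
  Finset.univ.filter fun u => c u = k ∧ f u < f v ∧ G.Adj v u

open Classical in
noncomputable def mval (k : Fin 2) (v : V) : ℝ :=
  if h : (earlierNbrs G f c k v).Nonempty then (((earlierNbrs G f c k v).inf' h f : ℕ) : ℝ)
  else if c v = k then (f v : ℝ) else (f v : ℝ) - 2⁻¹

noncomputable def fwdBox (M : ℝ) (v : V) : Box :=
  ⟨mval G f c 1 v - (M + 1),
   if c v = 0 then (f v : ℝ) + 1 else (f v : ℝ) - (M + 1),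
   mval G f c 0 v - (M + 1),
   if c v = 0 then (f v : ℝ) - (M + 1) else (f v : ℝ) + 1⟩

lemma mval_le (k : Fin 2) (v : V) : mval G f c k v ≤ (f v : ℝ) := by
  unfold mval
  split
  · rename_i h
    obtain ⟨u, hu, heq⟩ := Finset.exists_mem_eq_inf' h f
    rw [heq]
    simp only [earlierNbrs, Finset.mem_filter] at hu
    exact_mod_cast le_of_lt hu.2.2.1
  · split
    · exact le_refl _
    · linarith

lemma mval_le_of_adj {k : Fin 2} {u v : V} (hu : c u = k) (hlt : f u < f v)
    (hadj : G.Adj v u) : mval G f c k v ≤ (f u : ℝ) := by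
  have hmem : u ∈ earlierNbrs G f c k v := by
    simp only [earlierNbrs, Finset.mem_filter]
    exact ⟨Finset.mem_univ _, hu, hlt, hadj⟩
  unfold mval
  rw [dif_pos ⟨u, hmem⟩]
  exact_mod_cast Finset.inf'_le f hmem

lemma adj_of_mval_le (hinj : Function.Injective f) (hcons : ConsistentWith G f c)
    {k : Fin 2} {u v : V} (hu : c u = k) (hlt : f u < f v)
    (hle : mval G f c k v ≤ (f u : ℝ)) : G.Adj v u := by
  unfold mval at hle
  split at hle
  · rename_i h
    obtain ⟨u0, hu0, heq⟩ := Finset.exists_mem_eq_inf' h f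
    rw [heq] at hle
    simp only [earlierNbrs, Finset.mem_filter] at hu0
    obtain ⟨-, hk0, hlt0, hadj0⟩ := hu0
    have hle' : f u0 ≤ f u := by exact_mod_cast hle
    rcases lt_or_eq_of_le hle' with h' | h'
    · exact hcons u0 u v h' hlt (hk0.trans hu.symm) hadj0
    · rwa [hinj h'] at hadj0
  · exfalso
    split at hle
    · have : (f u : ℝ) < f v := by exact_mod_cast hlt
      linarith
    · have : (f u : ℝ) + 1 ≤ f v := by exact_mod_cast hlt
      linarith

lemma fin2 (i : Fin 2) : i = 0 ∨ i = 1 := by fin_cases i <;> simp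

lemma fwd_inter_of_lt (hinj : Function.Injective f) (hcons : ConsistentWith G f c)
    {M : ℝ} (hM0 : 0 ≤ M) (hM : ∀ x : V, (f x : ℝ) ≤ M)
    {u v : V} (huv : f u < f v) :
    G.Adj u v ↔ ((fwdBox G f c M u).toSet ∩ (fwdBox G f c M v).toSet).Nonempty := by
  have hfu : (f u : ℝ) + 1 ≤ f v := by exact_mod_cast huv
  have hm0u := mval_le G f c 0 u
  have hm1u := mval_le G f c 1 u
  have hm0v := mval_le G f c 0 v
  have hm1v := mval_le G f c 1 v
  have hMu := hM u
  have hMv := hM v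
  have key : G.Adj u v ↔ mval G f c (c u) v ≤ (f u : ℝ) := by
    constructor
    · intro h
      exact mval_le_of_adj G f c rfl huv h.symm
    · intro h
      exact (adj_of_mval_le G f c hinj hcons rfl huv h).symm
  rw [box_inter_iff, key]
  rcases fin2 (c u) with hcu | hcu <;> rcases fin2 (c v) with hcv | hcv <;>
    rw [hcu] <;>
    simp only [fwdBox, hcu, hcv, if_pos, if_neg, one_ne_zero, reduceCtorEq, ite_true,
      ite_false, reduceIte] <;>
    simp only [max_le_iff, le_min_iff] <;>
    constructor <;>
    first
      | (intro h
         refine ⟨⟨⟨?_, ?_⟩, ?_, ?_⟩, ⟨?_, ?_⟩, ?_, ?_⟩ <;> linarith)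
      | (rintro ⟨⟨⟨h1, h2⟩, h3, h4⟩, ⟨h5, h6⟩, h7, h8⟩
         linarith)

lemma forward_dir (hinj : Function.Injective f) (hcons : ConsistentWith G f c) :
    ∃ (box : V → Box) (d1 d2 : ℝ),
      TwoDiagonal box d1 d2 ∧ Blocking box d1 d2 ∧ IsBoxModel G box := by
  set M : ℝ := ((Finset.univ.sup f : ℕ) : ℝ) with hMdef
  have hM0 : 0 ≤ M := by positivity
  have hM : ∀ x : V, (f x : ℝ) ≤ M := by
    intro x
    have : f x ≤ Finset.univ.sup f := Finset.le_sup (Finset.mem_univ x)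
    rw [hMdef]
    exact_mod_cast this
  refine ⟨fwdBox G f c M, -(M + 2), M + 2, ?_, ?_, ?_⟩
  · refine ⟨by linarith, by linarith, ?_, ?_⟩
    · intro u v huv
      have hfuv : f u ≠ f v := fun h => huv (hinj h)
      have hfuv' : (f u : ℝ) ≠ (f v : ℝ) := by exact_mod_cast hfuv
      intro heq
      rw [Prod.mk.injEq] at heq
      obtain ⟨hx, hy⟩ := heq
      have hMu := hM u
      have hMv := hM v
      rcases fin2 (c u) with hcu | hcu <;> rcases fin2 (c v) with hcv | hcv <;>
        simp only [fwdBox, hcu, hcv, if_pos, if_neg, one_ne_zero, reduceCtorEq, ite_true,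
          ite_false, reduceIte] at hx hy <;>
        first
          | (apply hfuv'; linarith)
          | linarith
    · intro v
      have hMv := hM v
      rcases fin2 (c v) with hcv | hcv <;>
        simp only [fwdBox, hcv, if_pos, if_neg, one_ne_zero, reduceCtorEq, ite_true,
          ite_false, reduceIte]
      · left
        refine ⟨by ring, by positivity, by linarith⟩
      · right
        refine ⟨by ring, by linarith, by positivity⟩
  · intro u v hu hv _
    have hMu := hM u
    have hMv := hM v
    have hm0u := mval_le G f c 0 u
    have hm1u := mval_le G f c 1 u
    have hm0v := mval_le G f c 0 v
    have hm1v := mval_le G f c 1 v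
    have hcu : c u = 1 := by
      rcases fin2 (c u) with hcu | hcu
      · exfalso
        simp only [fwdBox, hcu, if_pos, reduceIte] at hu
        linarith
      · exact hcu
    have hcv : c v = 0 := by
      rcases fin2 (c v) with hcv | hcv
      · exact hcv
      · exfalso
        simp only [fwdBox, hcv, if_neg, one_ne_zero, reduceCtorEq, ite_false, reduceIte] at hv
        linarith
    rcases le_or_gt (f u) (f v) with hle | hlt
    · right
      have hle' : (f u : ℝ) ≤ f v := by exact_mod_cast hle
      rw [horiz_inter_iff]
      simp only [fwdBox, hcu, hcv, if_pos, if_neg, one_ne_zero, reduceCtorEq, ite_true,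
        ite_false, reduceIte, max_le_iff, le_min_iff]
      refine ⟨⟨⟨?_, ?_⟩, ?_, ?_⟩, ?_⟩ <;> linarith
    · left
      have hlt' : (f v : ℝ) < f u := by exact_mod_cast hlt
      rw [vert_inter_iff]
      simp only [fwdBox, hcu, hcv, if_pos, if_neg, one_ne_zero, reduceCtorEq, ite_true,
        ite_false, reduceIte, max_le_iff, le_min_iff]
      refine ⟨⟨⟨?_, ?_⟩, ?_, ?_⟩, ?_⟩ <;> linarith
  · constructor
    · intro v
      have hMv := hM v
      have hm0v := mval_le G f c 0 v
      have hm1v := mval_le G f c 1 v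
      rcases fin2 (c v) with hcv | hcv <;>
        simp only [fwdBox, hcv, if_pos, if_neg, one_ne_zero, reduceCtorEq, ite_true,
          ite_false, reduceIte] <;>
        constructor <;> linarith
    · intro u v huv
      have hfuv : f u ≠ f v := fun h => huv (hinj h)
      rcases lt_or_gt_of_ne hfuv with h | h
      · exact fwd_inter_of_lt G f c hinj hcons hM0 hM h
      · rw [G.adj_comm, Set.inter_comm]
        exact fwd_inter_of_lt G f c hinj hcons hM0 hM h

end Forward

section Converse
variable {V : Type*}

/-- corner on diagonal `y = x + d` -/
def OnDiag (box : V → Box) (d : ℝ) (v : V) : Prop := (box v).y2 = (box v).x2 + d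

def CRel (box : V → Box) (d1 d2 : ℝ) (x y : V) : Prop :=
  (OnDiag box d1 x ∧ OnDiag box d1 y ∧ (box x).x2 < (box y).x2) ∨
  (OnDiag box d2 x ∧ OnDiag box d2 y ∧ (box x).x2 < (box y).x2) ∨
  (OnDiag box d2 x ∧ OnDiag box d1 y ∧ (box x).x2 < (box y).x1) ∨
  (OnDiag box d1 x ∧ OnDiag box d2 y ∧ (box x).x2 < (box y).y1 - d1)

def CInv (box : V → Box) (d1 d2 : ℝ) (x y : V) : Prop :=
  (OnDiag box d1 x → OnDiag box d1 y → (box x).x2 < (box y).x2) ∧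
  (OnDiag box d2 x → OnDiag box d2 y → (box x).x2 < (box y).x2) ∧
  (OnDiag box d1 x → OnDiag box d2 y →
    ∃ w, OnDiag box d2 w ∧ (box w).x2 ≤ (box y).x2 ∧ (box x).x2 < (box w).y1 - d1) ∧
  (OnDiag box d2 x → OnDiag box d1 y →
    ∃ z, OnDiag box d1 z ∧ (box z).x2 ≤ (box y).x2 ∧ (box x).x2 < (box z).x1)

variable {box : V → Box} {d1 d2 : ℝ}

lemma notBoth (hne : d1 ≠ d2) {v : V} (h1 : OnDiag box d1 v) (h2 : OnDiag box d2 v) : False := by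
  unfold OnDiag at h1 h2
  apply hne
  linarith

lemma cinv_base (hne : d1 ≠ d2) {x y : V} (h : CRel box d1 d2 x y) : CInv box d1 d2 x y := by
  rcases h with ⟨hx, hy, hlt⟩ | ⟨hx, hy, hlt⟩ | ⟨hx, hy, hlt⟩ | ⟨hx, hy, hlt⟩
  · exact ⟨fun _ _ => hlt, fun hx' _ => absurd (notBoth hne hx hx') id,
      fun _ hy' => absurd (notBoth hne hy hy') id, fun hx' _ => absurd (notBoth hne hx hx') id⟩
  · exact ⟨fun hx' _ => absurd (notBoth hne hx' hx) id, fun _ _ => hlt,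
      fun hx' _ => absurd (notBoth hne hx' hx) id, fun _ hy' => absurd (notBoth hne hy' hy) id⟩
  · exact ⟨fun hx' _ => absurd (notBoth hne hx' hx) id,
      fun _ hy' => absurd (notBoth hne hy hy') id,
      fun hx' _ => absurd (notBoth hne hx' hx) id,
      fun _ _ => ⟨y, hy, le_refl _, hlt⟩⟩
  · exact ⟨fun _ hy' => absurd (notBoth hne hy' hy) id,
      fun hx' _ => absurd (notBoth hne hx hx') id,
      fun _ _ => ⟨y, hy, le_refl _, hlt⟩,
      fun hx' _ => absurd (notBoth hne hx hx') id⟩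

lemma cinv_step (hne : d1 ≠ d2)
    (hdisj : ∀ w v, OnDiag box d2 w → OnDiag box d1 v →
      (box v).x1 ≤ (box w).x2 ∨ (box w).y1 ≤ (box v).y2)
    {x y z : V} (hxy : CInv box d1 d2 x y) (hyz : CRel box d1 d2 y z) :
    CInv box d1 d2 x z := by
  obtain ⟨i1, i2, i3, i4⟩ := hxy
  rcases hyz with ⟨hy, hz, hlt⟩ | ⟨hy, hz, hlt⟩ | ⟨hy, hz, hlt⟩ | ⟨hy, hz, hlt⟩
  · -- low-low chain
    refine ⟨fun hx _ => lt_trans (i1 hx hy) hlt,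
      fun _ hz' => absurd (notBoth hne hz hz') id,
      fun _ hz' => absurd (notBoth hne hz hz') id,
      fun hx _ => ?_⟩
    obtain ⟨z', hz', hle, h⟩ := i4 hx hy
    exact ⟨z', hz', hle.trans hlt.le, h⟩
  · -- up-up chain
    refine ⟨fun _ hz' => absurd (notBoth hne hz' hz) id,
      fun hx _ => lt_trans (i2 hx hy) hlt,
      fun hx _ => ?_,
      fun _ hz' => absurd (notBoth hne hz' hz) id⟩
    obtain ⟨w, hw, hle, h⟩ := i3 hx hy
    exact ⟨w, hw, hle.trans hlt.le, h⟩
  · -- up-low edge : (box y).x2 < (box z).x1, y up, z low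
    refine ⟨fun hx hz' => ?_, fun _ hz' => absurd (notBoth hne hz hz') id,
      fun _ hz' => absurd (notBoth hne hz hz') id, fun hx _ => ?_⟩
    · -- x low, z low : need x2 x < x2 z
      obtain ⟨w, hw, hle, h⟩ := i3 hx hy
      rcases hdisj w z hw hz with h' | h'
      · exact absurd (lt_of_lt_of_le hlt (h'.trans hle)) (lt_irrefl _)
      · have hzeq : (box z).y2 = (box z).x2 + d1 := hz
        linarith
    · -- x up : need witness low z' with x2 z' ≤ x2 z, x2 x < x1 z'
      exact ⟨z, hz, le_refl _, lt_trans (i2 hx hy) hlt⟩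
  · -- low-up edge : (box y).x2 < (box z).y1 - d1, y low, z up
    refine ⟨fun _ hz' => absurd (notBoth hne hz' hz) id,
      fun hx _ => ?_,
      fun hx _ => ⟨z, hz, le_refl _, lt_trans (i1 hx hy) hlt⟩,
      fun _ hz' => absurd (notBoth hne hz' hz) id⟩
    -- x up, z up : need x2 x < x2 z
    obtain ⟨z', hz', hle, h⟩ := i4 hx hy
    rcases hdisj z z' hz hz' with h' | h'
    · linarith
    · have hzeq : (box z').y2 = (box z').x2 + d1 := hz'
      linarith

lemma cinv_of_transGen (hne : d1 ≠ d2)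
    (hdisj : ∀ w v, OnDiag box d2 w → OnDiag box d1 v →
      (box v).x1 ≤ (box w).x2 ∨ (box w).y1 ≤ (box v).y2)
    {x y : V} (h : Relation.TransGen (CRel box d1 d2) x y) : CInv box d1 d2 x y := by
  induction h with
  | single h => exact cinv_base hne h
  | tail _ h2 ih => exact cinv_step hne hdisj ih h2

lemma crel_irrefl (hne : d1 ≠ d2)
    (hdisj : ∀ w v, OnDiag box d2 w → OnDiag box d1 v →
      (box v).x1 ≤ (box w).x2 ∨ (box w).y1 ≤ (box v).y2)
    (hall : ∀ v, OnDiag box d1 v ∨ OnDiag box d2 v)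
    (x : V) : ¬ Relation.TransGen (CRel box d1 d2) x x := by
  intro h
  obtain ⟨i1, i2, -, -⟩ := cinv_of_transGen hne hdisj h
  rcases hall x with h' | h'
  · exact lt_irrefl _ (i1 h' h')
  · exact lt_irrefl _ (i2 h' h')

open Classical in
noncomputable def rankf {V : Type*} [Fintype V] (R : V → V → Prop) (v : V) : ℕ :=
  Fintype.card V * (Finset.univ.filter fun u => Relation.TransGen R u v).card
    + (Fintype.equivFin V v).val

lemma rankf_lt {V : Type*} [Fintype V] (R : V → V → Prop)
    (hirr : ∀ x, ¬ Relation.TransGen R x x) {x y : V}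
    (h : Relation.TransGen R x y) : rankf R x < rankf R y := by
  classical
  set px := (Finset.univ.filter fun u => Relation.TransGen R u x) with hpx
  set py := (Finset.univ.filter fun u => Relation.TransGen R u y) with hpy
  have hsub : px ⊆ py := by
    intro a ha
    simp only [hpx, hpy, Finset.mem_filter, Finset.mem_univ, true_and] at ha ⊢
    exact ha.trans h
  have hcard : px.card < py.card := by
    apply Finset.card_lt_card
    rw [Finset.ssubset_iff_of_subset hsub]
    refine ⟨x, ?_, ?_⟩ <;>
      simp only [hpx, hpy, Finset.mem_filter, Finset.mem_univ, true_and]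
    · exact h
    · exact hirr x
  have hgx : (Fintype.equivFin V x).val < Fintype.card V := (Fintype.equivFin V x).isLt
  unfold rankf
  rw [← hpx, ← hpy]
  calc Fintype.card V * px.card + (Fintype.equivFin V x).val
      < Fintype.card V * px.card + Fintype.card V := by omega
    _ = Fintype.card V * (px.card + 1) := by ring
    _ ≤ Fintype.card V * py.card := Nat.mul_le_mul_left _ (by omega)
    _ ≤ _ := Nat.le_add_right _ _

lemma rankf_inj {V : Type*} [Fintype V] (R : V → V → Prop)
    (hirr : ∀ x, ¬ Relation.TransGen R x x) :
    Function.Injective (rankf R) := by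
  classical
  intro x y hxy
  have hgx : (Fintype.equivFin V x).val < Fintype.card V := (Fintype.equivFin V x).isLt
  have hgy : (Fintype.equivFin V y).val < Fintype.card V := (Fintype.equivFin V y).isLt
  unfold rankf at hxy
  set px := (Finset.univ.filter fun u => Relation.TransGen R u x).card with hpx
  set py := (Finset.univ.filter fun u => Relation.TransGen R u y).card with hpy
  have hpc : px = py := by
    rcases Nat.lt_trichotomy px py with h | h | h
    · exfalso
      have h2 : Fintype.card V * px + Fintype.card V ≤ Fintype.card V * py := by
        calc Fintype.card V * px + Fintype.card V = Fintype.card V * (px + 1) := by ring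
          _ ≤ Fintype.card V * py := Nat.mul_le_mul_left _ (by omega)
      omega
    · exact h
    · exfalso
      have h2 : Fintype.card V * py + Fintype.card V ≤ Fintype.card V * px := by
        calc Fintype.card V * py + Fintype.card V = Fintype.card V * (py + 1) := by ring
          _ ≤ Fintype.card V * px := Nat.mul_le_mul_left _ (by omega)
      omega
  rw [hpc] at hxy
  have hg : (Fintype.equivFin V x).val = (Fintype.equivFin V y).val := by omega
  exact (Fintype.equivFin V).injective (Fin.val_injective hg)

lemma converse_dir {V : Type*} [Fintype V] (G : SimpleGraph V) (box : V → Box) (d1 d2 : ℝ)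
    (hd1 : d1 < 0) (hd2 : 0 < d2)
    (hdist : ∀ u v : V, u ≠ v → ((box u).x2, (box u).y2) ≠ ((box v).x2, (box v).y2))
    (hpos : ∀ v : V,
      ((box v).y2 = (box v).x2 + d1 ∧ 0 ≤ (box v).x2 ∧ (box v).y2 ≤ 0) ∨
      ((box v).y2 = (box v).x2 + d2 ∧ (box v).x2 ≤ 0 ∧ 0 ≤ (box v).y2))
    (hblock : ∀ u v : V, (box u).y2 = (box u).x2 + d2 → (box v).y2 = (box v).x2 + d1 →
      ¬ ((box u).toSet ∩ (box v).toSet).Nonempty →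
      ((box u).vert ∩ (box v).toSet).Nonempty ∨ ((box v).horiz ∩ (box u).toSet).Nonempty)
    (hnd : ∀ v : V, (box v).x1 ≤ (box v).x2 ∧ (box v).y1 ≤ (box v).y2)
    (hadj : ∀ u v : V, u ≠ v → (G.Adj u v ↔ ((box u).toSet ∩ (box v).toSet).Nonempty)) :
    ∃ f : V → ℕ, Function.Injective f ∧ ∃ c : V → Fin 2, ConsistentWith G f c := by
  classical
  have hne12 : d1 ≠ d2 := by linarith
  have hall : ∀ v, OnDiag box d1 v ∨ OnDiag box d2 v := fun v =>
    (hpos v).imp And.left And.left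
  have hLb : ∀ v, OnDiag box d1 v → 0 ≤ (box v).x2 ∧ (box v).y2 ≤ 0 := by
    intro v hv
    rcases hpos v with ⟨_, h⟩ | ⟨h', _⟩
    · exact h
    · exact absurd (notBoth hne12 hv h') id
  have hUb : ∀ v, OnDiag box d2 v → (box v).x2 ≤ 0 ∧ 0 ≤ (box v).y2 := by
    intro v hv
    rcases hpos v with ⟨h', _⟩ | ⟨_, h⟩
    · exact absurd (notBoth hne12 h' hv) id
    · exact h
  have hdisj : ∀ w v, OnDiag box d2 w → OnDiag box d1 v →
      (box v).x1 ≤ (box w).x2 ∨ (box w).y1 ≤ (box v).y2 := by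
    intro w v hw hv
    by_cases hne : ((box w).toSet ∩ (box v).toSet).Nonempty
    · rw [box_inter_iff] at hne
      exact Or.inl (le_trans (le_max_right _ _) (hne.1.trans (min_le_left _ _)))
    · rcases hblock w v hw hv hne with h | h
      · rw [vert_inter_iff] at h
        exact Or.inl (le_trans (le_max_right _ _) (h.1.trans (min_le_left _ _)))
      · rw [horiz_inter_iff] at h
        exact Or.inr (le_trans (le_max_right _ _) (h.1.trans (min_le_left _ _)))
  set R := CRel box d1 d2 with hRdef
  have hirr : ∀ x, ¬ Relation.TransGen R x x := crel_irrefl hne12 hdisj hall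
  set f := rankf R with hfdef
  have hresp : ∀ x y, R x y → f x < f y := fun x y h =>
    rankf_lt R hirr (Relation.TransGen.single h)
  have hordR : ∀ x y, f x < f y → ¬ R y x := by
    intro x y h hr
    have := hresp y x hr
    omega
  refine ⟨f, rankf_inj R hirr, fun v => if OnDiag box d1 v then 0 else 1, ?_⟩
  intro u v w hfu hfv hcuv hadjwu
  have hnuv : u ≠ v := fun h => by subst h; exact lt_irrefl _ hfu
  have hnvw : v ≠ w := fun h => by subst h; exact lt_irrefl _ hfv
  have hnuw : u ≠ w := fun h => by subst h; exact lt_irrefl _ (hfu.trans hfv)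
  have hcls : (OnDiag box d1 u ∧ OnDiag box d1 v) ∨ (OnDiag box d2 u ∧ OnDiag box d2 v) := by
    by_cases hu : OnDiag box d1 u <;> by_cases hv : OnDiag box d1 v
    · exact Or.inl ⟨hu, hv⟩
    · simp [hu, hv] at hcuv
    · simp [hu, hv] at hcuv
    · exact Or.inr ⟨(hall u).resolve_left hu, (hall v).resolve_left hv⟩
  -- order implies corner order within a class
  have hLlt : ∀ x y, OnDiag box d1 x → OnDiag box d1 y → f x < f y →
      (box x).x2 < (box y).x2 := by
    intro x y hx hy hf
    have hnexy : x ≠ y := fun h => by subst h; exact lt_irrefl _ hf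
    have hd := hdist x y hnexy
    have hx2 : (box x).x2 ≠ (box y).x2 := by
      intro h
      apply hd
      rw [Prod.mk.injEq]
      refine ⟨h, ?_⟩
      have h1 : (box x).y2 = (box x).x2 + d1 := hx
      have h2 : (box y).y2 = (box y).x2 + d1 := hy
      rw [h1, h2, h]
    rcases lt_or_gt_of_ne hx2 with h | h
    · exact h
    · exact absurd (Or.inl ⟨hy, hx, h⟩) (hordR x y hf)
  have hUlt : ∀ x y, OnDiag box d2 x → OnDiag box d2 y → f x < f y →
      (box x).x2 < (box y).x2 := by
    intro x y hx hy hf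
    have hnexy : x ≠ y := fun h => by subst h; exact lt_irrefl _ hf
    have hd := hdist x y hnexy
    have hx2 : (box x).x2 ≠ (box y).x2 := by
      intro h
      apply hd
      rw [Prod.mk.injEq]
      refine ⟨h, ?_⟩
      have h1 : (box x).y2 = (box x).x2 + d2 := hx
      have h2 : (box y).y2 = (box y).x2 + d2 := hy
      rw [h1, h2, h]
    rcases lt_or_gt_of_ne hx2 with h | h
    · exact h
    · exact absurd (Or.inr (Or.inl ⟨hy, hx, h⟩)) (hordR x y hf)
  have hwu := (box_inter_iff _ _).mp ((hadj w u hnuw.symm).mp hadjwu)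
  have hx1wu : (box w).x1 ≤ (box u).x2 :=
    le_trans (le_max_left _ _) (hwu.1.trans (min_le_right _ _))
  have hy1wu : (box w).y1 ≤ (box u).y2 :=
    le_trans (le_max_left _ _) (hwu.2.trans (min_le_right _ _))
  apply (hadj w v hnvw.symm).mpr
  rw [box_inter_iff]
  simp only [max_le_iff, le_min_iff]
  obtain ⟨hndw1, hndw2⟩ := hnd w
  obtain ⟨hndv1, hndv2⟩ := hnd v
  rcases hcls with ⟨hu, hv⟩ | ⟨hu, hv⟩
  · -- u, v on lower diagonal
    have huv2 : (box u).x2 < (box v).x2 := hLlt u v hu hv hfu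
    have hueq : (box u).y2 = (box u).x2 + d1 := hu
    have hveq : (box v).y2 = (box v).x2 + d1 := hv
    rcases hall w with hw | hw
    · have hvw2 : (box v).x2 < (box w).x2 := hLlt v w hv hw hfv
      have hweq : (box w).y2 = (box w).x2 + d1 := hw
      refine ⟨⟨⟨?_, ?_⟩, ?_, ?_⟩, ⟨?_, ?_⟩, ?_, ?_⟩ <;> linarith
    · -- w on upper diagonal
      have hweq : (box w).y2 = (box w).x2 + d2 := hw
      have key : (box v).x1 ≤ (box w).x2 := by
        by_contra h'
        push_neg at h'
        exact absurd (Or.inr (Or.inr (Or.inl ⟨hw, hv, h'⟩))) (hordR v w hfv)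
      obtain ⟨hvb1, hvb2⟩ := hLb v hv
      obtain ⟨hwb1, hwb2⟩ := hUb w hw
      refine ⟨⟨⟨?_, ?_⟩, ?_, ?_⟩, ⟨?_, ?_⟩, ?_, ?_⟩ <;> linarith
  · -- u, v on upper diagonal
    have huv2 : (box u).x2 < (box v).x2 := hUlt u v hu hv hfu
    have hueq : (box u).y2 = (box u).x2 + d2 := hu
    have hveq : (box v).y2 = (box v).x2 + d2 := hv
    rcases hall w with hw | hw
    · -- w on lower diagonal
      have hweq : (box w).y2 = (box w).x2 + d1 := hw
      have key : (box v).y1 - d1 ≤ (box w).x2 := by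
        by_contra h'
        push_neg at h'
        exact absurd (Or.inr (Or.inr (Or.inr ⟨hw, hv, h'⟩))) (hordR v w hfv)
      obtain ⟨hvb1, hvb2⟩ := hUb v hv
      obtain ⟨hwb1, hwb2⟩ := hLb w hw
      refine ⟨⟨⟨?_, ?_⟩, ?_, ?_⟩, ⟨?_, ?_⟩, ?_, ?_⟩ <;> linarith
    · have hvw2 : (box v).x2 < (box w).x2 := hUlt v w hv hw hfv
      have hweq : (box w).y2 = (box w).x2 + d2 := hw
      refine ⟨⟨⟨?_, ?_⟩, ?_, ?_⟩, ⟨?_, ?_⟩, ?_, ?_⟩ <;> linarith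

end Converse

/-- A graph is 2-thin if and only if it has a blocking 2-diagonal intersection model of
axis-parallel rectangles in the plane. -/
theorem twoThin_iff_blocking_twoDiagonal_model {V : Type*} [Fintype V]
    (G : SimpleGraph V) :
    TwoThin G ↔ ∃ (box : V → Box) (d1 d2 : ℝ),
      TwoDiagonal box d1 d2 ∧ Blocking box d1 d2 ∧ IsBoxModel G box := by
  constructor
  · rintro ⟨f, hinj, c, hcons⟩
    exact forward_dir G f c hinj hcons
  · rintro ⟨box, d1, d2, ⟨hd1, hd2, hdist, hpos⟩, hblock, hnd, hadj⟩
    exact converse_dir G box d1 d2 hd1 hd2 hdist hpos hblock hnd hadj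
end

section
/- A graph G is proper 2-thin if and only if it has a bi-semi-proper weakly 2-diagonal box intersection model; equivalently, if and only if it has a bi-semi-proper blocking 2-diagonal model. -/
/-- A graph is proper 2-thin if it admits a vertex ordering and a 2-class partition such
that both the ordering and its reverse are consistent with the partition. -/
def ProperTwoThin {V : Type*} (G : SimpleGraph V) : Prop :=
  ∃ f : V → ℕ, Function.Injective f ∧
    ∃ c : V → Fin 2, ConsistentWith G f c ∧ RevConsistentWith G f c

/-- Weakly 2-diagonal: upper-right corners pairwise distinct, each on one of two fixed
diagonals `y = x + d1`, `y = x + d2` with `d1 < d2`. -/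
def WeaklyTwoDiagonal {V : Type*} (box : V → Box) (d1 d2 : ℝ) : Prop :=
  d1 < d2 ∧
  (∀ u v : V, u ≠ v → ((box u).x2, (box u).y2) ≠ ((box v).x2, (box v).y2)) ∧
  ∀ v : V, (box v).y2 = (box v).x2 + d1 ∨ (box v).y2 = (box v).x2 + d2

/-- Bi-semi-proper property. -/
def BiSemiProper {V : Type*} (box : V → Box) : Prop :=
  ∀ u v : V, (box u).y2 - (box u).x2 = (box v).y2 - (box v).x2 →
    (box u).x2 < (box v).x2 → (box u).x1 ≤ (box v).x1 ∧ (box u).y1 ≤ (box v).y1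

open scoped Classical
set_option linter.unusedSectionVars false

namespace P2T

lemma fin2cases (a : Fin 2) : a = 0 ∨ a = 1 := by omega

lemma box_inter_iff (a b : Box) (ha : a.x1 ≤ a.x2 ∧ a.y1 ≤ a.y2)
    (hb : b.x1 ≤ b.x2 ∧ b.y1 ≤ b.y2) :
    (a.toSet ∩ b.toSet).Nonempty ↔
      (a.x1 ≤ b.x2 ∧ b.x1 ≤ a.x2 ∧ a.y1 ≤ b.y2 ∧ b.y1 ≤ a.y2) := by
  constructor
  · rintro ⟨⟨px, py⟩, ⟨⟨hx1, hx2⟩, hy1, hy2⟩, ⟨⟨hx1', hx2'⟩, hy1', hy2'⟩⟩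
    exact ⟨le_trans hx1 hx2', le_trans hx1' hx2, le_trans hy1 hy2', le_trans hy1' hy2⟩
  · rintro ⟨h1, h2, h3, h4⟩
    refine ⟨(max a.x1 b.x1, max a.y1 b.y1), ⟨⟨le_max_left _ _, max_le ha.1 h2⟩,
      le_max_left _ _, max_le ha.2 h4⟩, ⟨⟨le_max_right _ _, max_le h1 hb.1⟩,
      le_max_right _ _, max_le h3 hb.2⟩⟩

section Backward

variable {V : Type*} [Fintype V]

/-- Bundle of the hypotheses of a bi-semi-proper weakly 2-diagonal box model. -/
structure WModel (G : SimpleGraph V) (box : V → Box) (d1 d2 : ℝ) : Prop where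
  hd : d1 < d2
  inj2 : ∀ u v : V, u ≠ v → ((box u).x2, (box u).y2) ≠ ((box v).x2, (box v).y2)
  diag : ∀ v : V, (box v).y2 = (box v).x2 + d1 ∨ (box v).y2 = (box v).x2 + d2
  bsp : BiSemiProper box
  wf : ∀ v : V, (box v).x1 ≤ (box v).x2 ∧ (box v).y1 ≤ (box v).y2
  adj : ∀ u v : V, u ≠ v → (G.Adj u v ↔ ((box u).toSet ∩ (box v).toSet).Nonempty)

/-- The diagonal class of a vertex. -/
noncomputable def cls (box : V → Box) (d1 : ℝ) (v : V) : Fin 2 :=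
  if (box v).y2 = (box v).x2 + d1 then 0 else 1

variable {G : SimpleGraph V} {box : V → Box} {d1 d2 : ℝ}

lemma cls0 {v : V} (h : cls box d1 v = 0) : (box v).y2 = (box v).x2 + d1 := by
  by_cases hc : (box v).y2 = (box v).x2 + d1
  · exact hc
  · simp [cls, hc] at h

lemma cls1 (hm : WModel G box d1 d2) {v : V} (h : cls box d1 v = 1) :
    (box v).y2 = (box v).x2 + d2 := by
  by_cases hc : (box v).y2 = (box v).x2 + d1
  · simp [cls, hc] at h
  · rcases hm.diag v with h' | h'
    · exact absurd h' hc
    · exact h'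

lemma cls_eq_zero_or (v : V) : cls box d1 v = 0 ∨ cls box d1 v = 1 :=
  fin2cases _

lemma diff_eq (hm : WModel G box d1 d2) {u v : V} (h : cls box d1 u = cls box d1 v) :
    (box u).y2 - (box u).x2 = (box v).y2 - (box v).x2 := by
  rcases cls_eq_zero_or (box := box) (d1 := d1) u with h0 | h1
  · rw [cls0 h0, cls0 (h ▸ h0)]; ring
  · rw [cls1 hm h1, cls1 hm (h ▸ h1)]; ring

lemma y2_lt (hm : WModel G box d1 d2) {u v : V} (h : cls box d1 u = cls box d1 v)
    (hx : (box u).x2 < (box v).x2) : (box u).y2 < (box v).y2 := by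
  have := diff_eq hm h
  linarith

lemma y2_le (hm : WModel G box d1 d2) {u v : V} (h : cls box d1 u = cls box d1 v)
    (hx : (box u).x2 ≤ (box v).x2) : (box u).y2 ≤ (box v).y2 := by
  have := diff_eq hm h
  linarith

lemma eq_of_cls_x2 (hm : WModel G box d1 d2) {u v : V} (h : cls box d1 u = cls box d1 v)
    (hx : (box u).x2 = (box v).x2) : u = v := by
  by_contra hne
  have hy : (box u).y2 = (box v).y2 := by
    have := diff_eq hm h; linarith
  exact hm.inj2 u v hne (by rw [hx, hy])

lemma bsp' (hm : WModel G box d1 d2) {u v : V} (h : cls box d1 u = cls box d1 v)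
    (hx : (box u).x2 ≤ (box v).x2) :
    (box u).x1 ≤ (box v).x1 ∧ (box u).y1 ≤ (box v).y1 := by
  rcases lt_or_eq_of_le hx with hlt | heq
  · exact hm.bsp u v (diff_eq hm h) hlt
  · rw [eq_of_cls_x2 hm h heq]
    exact ⟨le_rfl, le_rfl⟩

lemma adj_conds (hm : WModel G box d1 d2) {u v : V} (h : G.Adj u v) :
    (box u).x1 ≤ (box v).x2 ∧ (box v).x1 ≤ (box u).x2 ∧
      (box u).y1 ≤ (box v).y2 ∧ (box v).y1 ≤ (box u).y2 :=
  (box_inter_iff _ _ (hm.wf u) (hm.wf v)).mp ((hm.adj u v h.ne).mp h)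

lemma adj_of_conds (hm : WModel G box d1 d2) {u v : V} (hne : u ≠ v)
    (h1 : (box u).x1 ≤ (box v).x2) (h2 : (box v).x1 ≤ (box u).x2)
    (h3 : (box u).y1 ≤ (box v).y2) (h4 : (box v).y1 ≤ (box u).y2) : G.Adj u v :=
  (hm.adj u v hne).mpr ((box_inter_iff _ _ (hm.wf u) (hm.wf v)).mpr ⟨h1, h2, h3, h4⟩)

lemma cls_ne_vertex {u v : V} (hu : cls box d1 u = 0) (hv : cls box d1 v = 1) : u ≠ v := by
  intro h; rw [h, hv] at hu; exact absurd hu (by decide)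

/-- Conditions C1 and C3 for a cross pair, from suitable witnesses. -/
lemma cond13 (hm : WModel G box d1 d2) {l h : V} (hl : cls box d1 l = 0)
    (hh : cls box d1 h = 1)
    (hw : (∃ l0 h', cls box d1 l0 = 0 ∧ cls box d1 h' = 1 ∧
            (box l).x2 ≤ (box l0).x2 ∧ (box h').x2 < (box h).x2 ∧ G.Adj l0 h') ∨
          (∃ l'', cls box d1 l'' = 0 ∧ (box l).x2 ≤ (box l'').x2 ∧ G.Adj h l'')) :
    (box l).x1 ≤ (box h).x2 ∧ (box l).y1 ≤ (box h).y2 := by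
  rcases hw with ⟨l0, h', hcl0, hch', hle, hlt, hadj⟩ | ⟨l'', hcl'', hle, hadj⟩
  · have hc := adj_conds hm hadj
    have hb := bsp' hm (hl.trans hcl0.symm) hle
    have hy : (box h').y2 ≤ (box h).y2 := le_of_lt (y2_lt hm (hch'.trans hh.symm) hlt)
    exact ⟨le_trans hb.1 (le_trans hc.1 (le_of_lt hlt)),
      le_trans hb.2 (le_trans hc.2.2.1 hy)⟩
  · have hc := adj_conds hm hadj
    have hb := bsp' hm (hl.trans hcl''.symm) hle
    exact ⟨le_trans hb.1 hc.2.1, le_trans hb.2 hc.2.2.2⟩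

/-- Conditions C2 and C4 for a cross pair, from suitable witnesses. -/
lemma cond24 (hm : WModel G box d1 d2) {l h : V} (hl : cls box d1 l = 0)
    (hh : cls box d1 h = 1)
    (hw : (∃ h0 l', cls box d1 h0 = 1 ∧ cls box d1 l' = 0 ∧
            (box h).x2 ≤ (box h0).x2 ∧ (box l').x2 < (box l).x2 ∧ G.Adj h0 l') ∨
          (∃ h'', cls box d1 h'' = 1 ∧ (box h).x2 ≤ (box h'').x2 ∧ G.Adj l h'')) :
    (box h).x1 ≤ (box l).x2 ∧ (box h).y1 ≤ (box l).y2 := by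
  rcases hw with ⟨h0, l', hch0, hcl', hle, hlt, hadj⟩ | ⟨h'', hch'', hle, hadj⟩
  · have hc := adj_conds hm hadj
    have hb := bsp' hm (hh.trans hch0.symm) hle
    have hy : (box l').y2 ≤ (box l).y2 := le_of_lt (y2_lt hm (hcl'.trans hl.symm) hlt)
    exact ⟨le_trans hb.1 (le_trans hc.1 (le_of_lt hlt)),
      le_trans hb.2 (le_trans hc.2.2.1 hy)⟩
  · have hc := adj_conds hm hadj
    have hb := bsp' hm (hh.trans hch''.symm) hle
    exact ⟨le_trans hb.1 hc.2.1, le_trans hb.2 hc.2.2.2⟩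

/-- The "upper vertex `h` must come before lower vertex `l`" predicate. -/
def HF (G : SimpleGraph V) (box : V → Box) (d1 : ℝ) (l h : V) : Prop :=
  ∃ ls, cls box d1 ls = 0 ∧ (box ls).x2 ≤ (box l).x2 ∧ ¬ G.Adj ls h ∧
    ((∃ l', cls box d1 l' = 0 ∧ (box l').x2 < (box ls).x2 ∧ G.Adj h l') ∨
     (∃ h'', cls box d1 h'' = 1 ∧ (box h).x2 < (box h'').x2 ∧ G.Adj ls h''))

/-- `HF` is upward closed in the lower vertex. -/
lemma HF_mono_l {G : SimpleGraph V} {l l' h : V} (hhf : HF G box d1 l h)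
    (hle : (box l).x2 ≤ (box l').x2) : HF G box d1 l' h := by
  obtain ⟨ls, h1, h2, h3, h4⟩ := hhf
  exact ⟨ls, h1, le_trans h2 hle, h3, h4⟩

/-- `HF` is downward closed in the upper vertex. -/
lemma HF_mono_h (hm : WModel G box d1 d2) {l h h' : V} (hhf : HF G box d1 l h)
    (hh : cls box d1 h = 1) (hch' : cls box d1 h' = 1)
    (hlt : (box h').x2 < (box h).x2) : HF G box d1 l h' := by
  obtain ⟨ls, hcls, hle, hnadj, hw⟩ := hhf
  rcases hw with ⟨la, hcla, hlta, hadja⟩ | ⟨hb, hchb, hltb, hadjb⟩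
  · by_cases hA : G.Adj h' la
    · -- use ls with witness (a)
      refine ⟨ls, hcls, hle, ?_, Or.inl ⟨la, hcla, hlta, hA⟩⟩
      intro hB
      apply hnadj
      have h13 := cond13 hm hcls hh (Or.inl ⟨ls, h', hcls, hch', le_rfl, hlt, hB⟩)
      have h24 := cond24 hm hcls hh (Or.inl ⟨h, la, hh, hcla, le_rfl, hlta, hadja⟩)
      exact adj_of_conds hm (cls_ne_vertex hcls hh) h13.1 h24.1 h13.2 h24.2
    · -- use la with witness (b), h'' := h
      exact ⟨la, hcla, le_of_lt (lt_of_lt_of_le hlta hle),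
        fun hc => hA hc.symm, Or.inr ⟨h, hh, hlt, hadja.symm⟩⟩
  · by_cases hB : G.Adj ls h'
    · exfalso
      apply hnadj
      have h13 := cond13 hm hcls hh (Or.inl ⟨ls, h', hcls, hch', le_rfl, hlt, hB⟩)
      have h24 := cond24 hm hcls hh (Or.inr ⟨hb, hchb, le_of_lt hltb, hadjb⟩)
      exact adj_of_conds hm (cls_ne_vertex hcls hh) h13.1 h24.1 h13.2 h24.2
    · exact ⟨ls, hcls, hle, hB, Or.inr ⟨hb, hchb, lt_trans hlt hltb, hadjb⟩⟩

/-- If `HF l h` holds together with an external forward witness, we get a contradiction. -/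
lemma HF_conflict (hm : WModel G box d1 d2) {l h : V} (hl : cls box d1 l = 0)
    (hh : cls box d1 h = 1) (hhf : HF G box d1 l h)
    (hw : (∃ h', cls box d1 h' = 1 ∧ (box h').x2 < (box h).x2 ∧ G.Adj l h') ∨
          (∃ l'', cls box d1 l'' = 0 ∧ (box l).x2 < (box l'').x2 ∧ G.Adj h l'')) :
    False := by
  obtain ⟨ls, hcls, hle, hnadj, hwi⟩ := hhf
  apply hnadj
  have h24 := cond24 hm hcls hh (by
    rcases hwi with ⟨la, hcla, hlta, hadja⟩ | ⟨hb, hchb, hltb, hadjb⟩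
    · exact Or.inl ⟨h, la, hh, hcla, le_rfl, hlta, hadja⟩
    · exact Or.inr ⟨hb, hchb, le_of_lt hltb, hadjb⟩)
  have h13 := cond13 hm hcls hh (by
    rcases hw with ⟨h', hch', hlt', hadj'⟩ | ⟨lc, hclc, hltc, hadjc⟩
    · exact Or.inl ⟨l, h', hl, hch', hle, hlt', hadj'⟩
    · exact Or.inr ⟨lc, hclc, le_trans hle (le_of_lt hltc), hadjc⟩)
  exact adj_of_conds hm (cls_ne_vertex hcls hh) h13.1 h24.1 h13.2 h24.2

end Backward


section Order

variable {V : Type*} [Fintype V] {G : SimpleGraph V} {box : V → Box} {d1 d2 : ℝ}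

/-- The order relation combining the within-class `x2` orders with the cross rule. -/
def rel (G : SimpleGraph V) (box : V → Box) (d1 : ℝ) (u v : V) : Prop :=
  (cls box d1 u = cls box d1 v ∧ (box u).x2 < (box v).x2) ∨
  (cls box d1 u = 0 ∧ cls box d1 v = 1 ∧ ¬ HF G box d1 u v) ∨
  (cls box d1 u = 1 ∧ cls box d1 v = 0 ∧ HF G box d1 v u)

lemma rel_samecls {u v : V} (hr : rel G box d1 u v) (h : cls box d1 u = cls box d1 v) :
    (box u).x2 < (box v).x2 := by
  rcases hr with ⟨_, h2⟩ | ⟨h0, h1, _⟩ | ⟨h1, h0, _⟩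
  · exact h2
  · rw [h0, h1] at h; exact absurd h (by decide)
  · rw [h1, h0] at h; exact absurd h (by decide)

lemma rel01 {u v : V} (hr : rel G box d1 u v) (h0 : cls box d1 u = 0)
    (h1 : cls box d1 v = 1) : ¬ HF G box d1 u v := by
  rcases hr with ⟨hc, _⟩ | ⟨_, _, h⟩ | ⟨hc, _, _⟩
  · rw [h0, h1] at hc; exact absurd hc (by decide)
  · exact h
  · rw [h0] at hc; exact absurd hc (by decide)

lemma rel10 {u v : V} (hr : rel G box d1 u v) (h1 : cls box d1 u = 1)
    (h0 : cls box d1 v = 0) : HF G box d1 v u := by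
  rcases hr with ⟨hc, _⟩ | ⟨hc, _, _⟩ | ⟨_, _, h⟩
  · rw [h0, h1] at hc; exact absurd hc (by decide)
  · rw [h1] at hc; exact absurd hc (by decide)
  · exact h

lemma rel_irrefl (u : V) : ¬ rel G box d1 u u := by
  rintro (⟨_, h⟩ | ⟨h0, h1, _⟩ | ⟨h1, h0, _⟩)
  · exact lt_irrefl _ h
  · exact absurd (h0.symm.trans h1) (by decide)
  · exact absurd (h0.symm.trans h1) (by decide)

lemma rel_total (hm : WModel G box d1 d2) {u v : V} (hne : u ≠ v) :
    rel G box d1 u v ∨ rel G box d1 v u := by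
  rcases fin2cases (cls box d1 u) with hu | hu <;>
    rcases fin2cases (cls box d1 v) with hv | hv
  · rcases lt_trichotomy ((box u).x2) ((box v).x2) with h | h | h
    · exact Or.inl (Or.inl ⟨hu.trans hv.symm, h⟩)
    · exact absurd (eq_of_cls_x2 hm (hu.trans hv.symm) h) hne
    · exact Or.inr (Or.inl ⟨hv.trans hu.symm, h⟩)
  · by_cases hf : HF G box d1 u v
    · exact Or.inr (Or.inr (Or.inr ⟨hv, hu, hf⟩))
    · exact Or.inl (Or.inr (Or.inl ⟨hu, hv, hf⟩))
  · by_cases hf : HF G box d1 v u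
    · exact Or.inl (Or.inr (Or.inr ⟨hu, hv, hf⟩))
    · exact Or.inr (Or.inr (Or.inl ⟨hv, hu, hf⟩))
  · rcases lt_trichotomy ((box u).x2) ((box v).x2) with h | h | h
    · exact Or.inl (Or.inl ⟨hu.trans hv.symm, h⟩)
    · exact absurd (eq_of_cls_x2 hm (hu.trans hv.symm) h) hne
    · exact Or.inr (Or.inl ⟨hv.trans hu.symm, h⟩)

lemma rel_trans (hm : WModel G box d1 d2) {u v w : V} (h1 : rel G box d1 u v)
    (h2 : rel G box d1 v w) : rel G box d1 u w := by
  rcases fin2cases (cls box d1 u) with hu | hu <;>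
    rcases fin2cases (cls box d1 v) with hv | hv <;>
      rcases fin2cases (cls box d1 w) with hw | hw
  · exact Or.inl ⟨hu.trans hw.symm,
      lt_trans (rel_samecls h1 (hu.trans hv.symm)) (rel_samecls h2 (hv.trans hw.symm))⟩
  · exact Or.inr (Or.inl ⟨hu, hw, fun hf => (rel01 h2 hv hw)
      (HF_mono_l hf (le_of_lt (rel_samecls h1 (hu.trans hv.symm))))⟩)
  · -- u:0 v:1 w:0
    refine Or.inl ⟨hu.trans hw.symm, ?_⟩
    by_contra hlt
    push_neg at hlt
    exact (rel01 h1 hu hv) (HF_mono_l (rel10 h2 hv hw) hlt)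
  · -- u:0 v:1 w:1
    exact Or.inr (Or.inl ⟨hu, hw, fun hf => (rel01 h1 hu hv)
      (HF_mono_h hm hf hw hv (rel_samecls h2 (hv.trans hw.symm)))⟩)
  · -- u:1 v:0 w:0
    exact Or.inr (Or.inr ⟨hu, hw,
      HF_mono_l (rel10 h1 hu hv) (le_of_lt (rel_samecls h2 (hv.trans hw.symm)))⟩)
  · -- u:1 v:0 w:1
    rcases lt_trichotomy ((box w).x2) ((box u).x2) with h | h | h
    · exact absurd (HF_mono_h hm (rel10 h1 hu hv) hu hw h) (rel01 h2 hv hw)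
    · rw [eq_of_cls_x2 hm (hw.trans hu.symm) h] at h2
      exact absurd (rel10 h1 hu hv) (rel01 h2 hv hu)
    · exact Or.inl ⟨hu.trans hw.symm, h⟩
  · -- u:1 v:1 w:0
    exact Or.inr (Or.inr ⟨hu, hw,
      HF_mono_h hm (rel10 h2 hv hw) hv hu (rel_samecls h1 (hu.trans hv.symm))⟩)
  · exact Or.inl ⟨hu.trans hw.symm,
      lt_trans (rel_samecls h1 (hu.trans hv.symm)) (rel_samecls h2 (hv.trans hw.symm))⟩

/-- The rank of a vertex in the order. -/
noncomputable def rnk (G : SimpleGraph V) (box : V → Box) (d1 : ℝ) (v : V) : ℕ :=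
  (Finset.univ.filter (fun u => rel G box d1 u v)).card

lemma rnk_lt (hm : WModel G box d1 d2) {u v : V} (h : rel G box d1 u v) :
    rnk G box d1 u < rnk G box d1 v := by
  apply Finset.card_lt_card
  have hsub : Finset.univ.filter (fun w => rel G box d1 w u) ⊆
      Finset.univ.filter (fun w => rel G box d1 w v) := by
    intro w hw
    simp only [Finset.mem_filter, Finset.mem_univ, true_and] at hw ⊢
    exact rel_trans hm hw h
  rw [Finset.ssubset_iff_of_subset hsub]
  exact ⟨u, by simp [h], by simp [rel_irrefl u]⟩

lemma rel_of_rnk_lt (hm : WModel G box d1 d2) {u v : V}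
    (h : rnk G box d1 u < rnk G box d1 v) : rel G box d1 u v := by
  by_contra hn
  rcases eq_or_ne u v with he | hne
  · rw [he] at h; exact lt_irrefl _ h
  · rcases rel_total hm hne with hr | hr
    · exact hn hr
    · exact absurd h (not_lt_of_gt (rnk_lt hm hr))

/-- The backward direction: a bi-semi-proper weakly 2-diagonal model yields proper 2-thinness. -/
lemma backward_main (hm : WModel G box d1 d2) : ProperTwoThin G := by
  refine ⟨rnk G box d1, ?_, cls box d1, ?_, ?_⟩
  · -- injective
    intro u v h
    by_contra hne
    rcases rel_total hm hne with hr | hr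
    · exact absurd h (Nat.ne_of_lt (rnk_lt hm hr))
    · exact absurd h.symm (Nat.ne_of_lt (rnk_lt hm hr))
  · -- ConsistentWith
    intro u v w h1 h2 hcl hadj
    have r1 := rel_of_rnk_lt hm h1
    have r2 := rel_of_rnk_lt hm h2
    have hxuv : (box u).x2 < (box v).x2 := rel_samecls r1 hcl
    rcases fin2cases (cls box d1 u) with hu | hu <;>
      rcases fin2cases (cls box d1 w) with hw | hw
    -- (0,0) same class
    · have hv : cls box d1 v = 0 := hcl ▸ hu
      have hvw : cls box d1 v = cls box d1 w := hv.trans hw.symm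
      have hxvw : (box v).x2 < (box w).x2 := rel_samecls r2 hvw
      have hc := adj_conds hm hadj
      refine adj_of_conds hm (fun he => absurd hxvw (by rw [he]; exact lt_irrefl _)) ?_ ?_ ?_ ?_
      · exact le_trans hc.1 (le_of_lt hxuv)
      · exact le_trans (hm.wf v).1 (le_of_lt hxvw)
      · exact le_trans hc.2.2.1 (le_of_lt (y2_lt hm hcl hxuv))
      · exact le_trans (hm.wf v).2 (le_of_lt (y2_lt hm hvw hxvw))
    -- (0,1) : u,v lower, w upper
    · have hv : cls box d1 v = 0 := hcl ▸ hu
      have hnf := rel01 r2 hv hw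
      by_contra hnadj
      exact hnf ⟨v, hv, le_rfl, fun h => hnadj h.symm, Or.inl ⟨u, hu, hxuv, hadj⟩⟩
    -- (1,0) : u,v upper, w lower
    · have hv : cls box d1 v = 1 := hcl ▸ hu
      have hhf := rel10 r2 hv hw
      exact absurd (HF_conflict hm hw hv hhf (Or.inl ⟨u, hu, hxuv, hadj⟩)) not_false
    -- (1,1) same class
    · have hv : cls box d1 v = 1 := hcl ▸ hu
      have hvw : cls box d1 v = cls box d1 w := hv.trans hw.symm
      have hxvw : (box v).x2 < (box w).x2 := rel_samecls r2 hvw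
      have hc := adj_conds hm hadj
      refine adj_of_conds hm (fun he => absurd hxvw (by rw [he]; exact lt_irrefl _)) ?_ ?_ ?_ ?_
      · exact le_trans hc.1 (le_of_lt hxuv)
      · exact le_trans (hm.wf v).1 (le_of_lt hxvw)
      · exact le_trans hc.2.2.1 (le_of_lt (y2_lt hm hcl hxuv))
      · exact le_trans (hm.wf v).2 (le_of_lt (y2_lt hm hvw hxvw))
  · -- RevConsistentWith
    intro u v w h1 h2 hcl hadj
    have r1 := rel_of_rnk_lt hm h1
    have r2 := rel_of_rnk_lt hm h2
    have hxvw : (box v).x2 < (box w).x2 := rel_samecls r2 hcl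
    rcases fin2cases (cls box d1 u) with hu | hu <;>
      rcases fin2cases (cls box d1 v) with hv | hv
    -- (0,0) same class
    · have hxuv : (box u).x2 < (box v).x2 := rel_samecls r1 (hu.trans hv.symm)
      have hc := adj_conds hm hadj
      have hb := bsp' hm hcl (le_of_lt hxvw)
      refine adj_of_conds hm (fun he => absurd hxuv (by rw [he]; exact lt_irrefl _)) ?_ ?_ ?_ ?_
      · exact le_trans (hm.wf u).1 (le_of_lt hxuv)
      · exact le_trans hb.1 hc.2.1
      · exact le_trans (hm.wf u).2 (le_of_lt (y2_lt hm (hu.trans hv.symm) hxuv))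
      · exact le_trans hb.2 hc.2.2.2
    -- u:0 v,w:1
    · have hnf := rel01 r1 hu hv
      by_contra hnadj
      exact hnf ⟨u, hu, le_rfl, hnadj, Or.inr ⟨w, hcl ▸ hv, hxvw, hadj⟩⟩
    -- u:1 v,w:0
    · have hhf := rel10 r1 hu hv
      exact absurd (HF_conflict hm hv hu hhf (Or.inr ⟨w, hcl ▸ hv, hxvw, hadj⟩)) not_false
    -- (1,1)
    · have hxuv : (box u).x2 < (box v).x2 := rel_samecls r1 (hu.trans hv.symm)
      have hc := adj_conds hm hadj
      have hb := bsp' hm hcl (le_of_lt hxvw)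
      refine adj_of_conds hm (fun he => absurd hxuv (by rw [he]; exact lt_irrefl _)) ?_ ?_ ?_ ?_
      · exact le_trans (hm.wf u).1 (le_of_lt hxuv)
      · exact le_trans hb.1 hc.2.1
      · exact le_trans (hm.wf u).2 (le_of_lt (y2_lt hm (hu.trans hv.symm) hxuv))
      · exact le_trans hb.2 hc.2.2.2

end Order


section Forward

variable {V : Type*} [Fintype V]

/-- Position of the first same-class neighbour before `v` (or `f v`). -/
noncomputable def lv (G : SimpleGraph V) (f : V → ℕ) (c : V → Fin 2) (v : V) : ℕ :=
  (insert (f v) ((Finset.univ.filter (fun u => G.Adj v u ∧ c u = c v ∧ f u < f v)).image f)).min'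
    (Finset.insert_nonempty _ _)

/-- Position of the first cross-class neighbour of `v` (or `f v`). -/
noncomputable def mv (G : SimpleGraph V) (f : V → ℕ) (c : V → Fin 2) (v : V) : ℕ :=
  (insert (f v) ((Finset.univ.filter (fun z => G.Adj v z ∧ c z ≠ c v)).image f)).min'
    (Finset.insert_nonempty _ _)

variable {G : SimpleGraph V} {f : V → ℕ} {c : V → Fin 2}

lemma lv_le_self (v : V) : lv G f c v ≤ f v :=
  Finset.min'_le _ _ (Finset.mem_insert_self _ _)

lemma lv_le {u v : V} (h : G.Adj v u) (hcl : c u = c v) (hlt : f u < f v) :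
    lv G f c v ≤ f u :=
  Finset.min'_le _ _ (Finset.mem_insert_of_mem (Finset.mem_image_of_mem f
    (by simp [h, hcl, hlt])))

lemma lv_cases (v : V) : lv G f c v = f v ∨
    ∃ u, G.Adj v u ∧ c u = c v ∧ f u < f v ∧ lv G f c v = f u := by
  have := Finset.min'_mem (insert (f v)
    ((Finset.univ.filter (fun u => G.Adj v u ∧ c u = c v ∧ f u < f v)).image f))
    (Finset.insert_nonempty _ _)
  rw [Finset.mem_insert] at this
  rcases this with h | h
  · exact Or.inl h
  · rw [Finset.mem_image] at h
    obtain ⟨u, hu, hfu⟩ := h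
    simp only [Finset.mem_filter, Finset.mem_univ, true_and] at hu
    exact Or.inr ⟨u, hu.1, hu.2.1, hu.2.2, hfu.symm⟩

lemma mv_le_self (v : V) : mv G f c v ≤ f v :=
  Finset.min'_le _ _ (Finset.mem_insert_self _ _)

lemma mv_le {v z : V} (h : G.Adj v z) (hcl : c z ≠ c v) : mv G f c v ≤ f z :=
  Finset.min'_le _ _ (Finset.mem_insert_of_mem (Finset.mem_image_of_mem f
    (by simp [h, hcl])))

lemma mv_cases (v : V) : mv G f c v = f v ∨
    ∃ z, G.Adj v z ∧ c z ≠ c v ∧ mv G f c v = f z := by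
  have := Finset.min'_mem (insert (f v)
    ((Finset.univ.filter (fun z => G.Adj v z ∧ c z ≠ c v)).image f))
    (Finset.insert_nonempty _ _)
  rw [Finset.mem_insert] at this
  rcases this with h | h
  · exact Or.inl h
  · rw [Finset.mem_image] at h
    obtain ⟨z, hz, hfz⟩ := h
    simp only [Finset.mem_filter, Finset.mem_univ, true_and] at hz
    exact Or.inr ⟨z, hz.1, hz.2, hfz.symm⟩

lemma lv_mono (hrev : RevConsistentWith G f c) {u v : V} (hcl : c u = c v)
    (hlt : f u < f v) : lv G f c u ≤ lv G f c v := by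
  rcases lv_cases (G := G) (f := f) (c := c) v with h | ⟨u', hadj, hcl', hlt', heq⟩
  · rw [h]; exact le_trans (lv_le_self u) (le_of_lt hlt)
  · rw [heq]
    rcases le_or_gt (f u) (f u') with hle | hgt
    · exact le_trans (lv_le_self u) hle
    · have hadj' : G.Adj u' u := hrev u' u v hgt hlt hcl hadj.symm
      exact lv_le hadj'.symm (hcl'.trans hcl.symm) hgt

lemma mv_mono (hrev : RevConsistentWith G f c) {u v : V} (hcl : c u = c v)
    (hlt : f u < f v) : mv G f c u ≤ mv G f c v := by
  rcases mv_cases (G := G) (f := f) (c := c) v with h | ⟨z, hadj, hcl', heq⟩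
  · rw [h]; exact le_trans (mv_le_self u) (le_of_lt hlt)
  · rw [heq]
    rcases le_or_gt (f u) (f z) with hle | hgt
    · exact le_trans (mv_le_self u) hle
    · have hadj' : G.Adj z u := hrev z u v hgt hlt hcl hadj.symm
      exact mv_le hadj'.symm (fun h => hcl' (h.trans hcl))

lemma adj_same_iff (hfinj : Function.Injective f) (hcons : ConsistentWith G f c)
    {u v : V} (hcl : c u = c v) (hlt : f u < f v) :
    (G.Adj u v ↔ lv G f c v ≤ f u) := by
  constructor
  · intro h
    exact lv_le h.symm hcl hlt
  · intro h
    rcases lv_cases (G := G) (f := f) (c := c) v with h' | ⟨u', hadj, hcl', hlt', heq⟩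
    · rw [h'] at h; exact absurd hlt (not_lt_of_ge h)
    · rw [heq] at h
      rcases eq_or_ne u' u with he | hne
      · exact (he ▸ hadj).symm
      · have hgt : f u' < f u := lt_of_le_of_ne h (fun hh => hne (hfinj hh))
        exact (hcons u' u v hgt hlt (hcl'.trans hcl.symm) hadj).symm

lemma adj_cross_iff (hfinj : Function.Injective f) (hcons : ConsistentWith G f c)
    {u v : V} (hcl : c u ≠ c v) :
    (G.Adj u v ↔ mv G f c u ≤ f v ∧ mv G f c v ≤ f u) := by
  constructor
  · intro h
    exact ⟨mv_le h (fun hh => hcl hh.symm), mv_le h.symm hcl⟩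
  · rintro ⟨h1, h2⟩
    have hne : u ≠ v := fun h => hcl (h ▸ rfl)
    have hfne : f u ≠ f v := fun h => hne (hfinj h)
    rcases lt_or_gt_of_ne hfne with hlt | hgt
    · -- f u < f v : use mv v ≤ f u
      rcases mv_cases (G := G) (f := f) (c := c) v with h' | ⟨z, hadj, hcl', heq⟩
      · rw [h'] at h2; exact absurd (lt_of_le_of_lt h2 hlt) (lt_irrefl _)
      · rw [heq] at h2
        rcases eq_or_ne z u with he | hne'
        · exact (he ▸ hadj).symm
        · have hgt' : f z < f u := lt_of_le_of_ne h2 (fun hh => hne' (hfinj hh))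
          have hclzu : c z = c u := by
            have h1' := hcl'
            have h2' : c u ≠ c v := hcl
            omega
          exact (hcons z u v hgt' hlt hclzu hadj).symm
    · -- f v < f u : use mv u ≤ f v
      rcases mv_cases (G := G) (f := f) (c := c) u with h' | ⟨z, hadj, hcl', heq⟩
      · rw [h'] at h1; exact absurd (lt_of_le_of_lt h1 hgt) (lt_irrefl _)
      · rw [heq] at h1
        rcases eq_or_ne z v with he | hne'
        · exact he ▸ hadj
        · have hgt' : f z < f v := lt_of_le_of_ne h1 (fun hh => hne' (hfinj hh))
          have hclzv : c z = c v := by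
            have h2' : c v ≠ c u := fun hh => hcl hh.symm
            omega
          exact hcons z v u hgt' hgt hclzv hadj

end Forward


section ForwardModel

variable {V : Type*} [Fintype V] {G : SimpleGraph V} {f : V → ℕ} {c : V → Fin 2}

/-- The big constant. -/
noncomputable def bigM (f : V → ℕ) : ℝ := ((Finset.univ.sup f : ℕ) : ℝ) + 1

/-- The box of a vertex in the constructed model. -/
noncomputable def fbox (G : SimpleGraph V) (f : V → ℕ) (c : V → Fin 2) (v : V) : Box :=
  if c v = 0 then
    ⟨min (lv G f c v : ℝ) ((mv G f c v : ℝ) - bigM f), (f v : ℝ),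
      (lv G f c v : ℝ) - bigM f, (f v : ℝ) - bigM f⟩
  else
    ⟨(lv G f c v : ℝ) - bigM f, (f v : ℝ) - bigM f,
      min (lv G f c v : ℝ) ((mv G f c v : ℝ) - bigM f), (f v : ℝ)⟩

lemma fbox0 {v : V} (h : c v = 0) : fbox G f c v =
    ⟨min (lv G f c v : ℝ) ((mv G f c v : ℝ) - bigM f), (f v : ℝ),
      (lv G f c v : ℝ) - bigM f, (f v : ℝ) - bigM f⟩ := by
  rw [fbox, if_pos h]

lemma fbox1 {v : V} (h : c v = 1) : fbox G f c v =
    ⟨(lv G f c v : ℝ) - bigM f, (f v : ℝ) - bigM f,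
      min (lv G f c v : ℝ) ((mv G f c v : ℝ) - bigM f), (f v : ℝ)⟩ := by
  rw [fbox, if_neg (by rw [h]; decide)]

lemma f_lt_bigM (v : V) : (f v : ℝ) < bigM f := by
  have h : f v ≤ Finset.univ.sup f := Finset.le_sup (Finset.mem_univ v)
  have h' : (f v : ℝ) ≤ ((Finset.univ.sup f : ℕ) : ℝ) := by exact_mod_cast h
  rw [bigM]; linarith

lemma one_le_bigM : (1 : ℝ) ≤ bigM (f := f) := by
  rw [bigM]
  have : (0:ℝ) ≤ ((Finset.univ.sup f : ℕ) : ℝ) := Nat.cast_nonneg _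
  linarith

lemma forward_main (hfinj : Function.Injective f) (hcons : ConsistentWith G f c)
    (hrev : RevConsistentWith G f c) :
    ∃ (box : V → Box) (d1 d2 : ℝ), TwoDiagonal box d1 d2 ∧ Blocking box d1 d2 ∧
      BiSemiProper box ∧ IsBoxModel G box := by
  set M := bigM (f := f) with hMdef
  have hM1 : (1:ℝ) ≤ M := one_le_bigM
  have hfM : ∀ v : V, (f v : ℝ) < M := f_lt_bigM
  have hlf : ∀ v : V, (lv G f c v : ℝ) ≤ (f v : ℝ) := fun v => by
    exact_mod_cast lv_le_self (G := G) (c := c) v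
  have hmf : ∀ v : V, (mv G f c v : ℝ) ≤ (f v : ℝ) := fun v => by
    exact_mod_cast mv_le_self (G := G) (c := c) v
  have hl0 : ∀ v : V, (0:ℝ) ≤ (lv G f c v : ℝ) := fun v => Nat.cast_nonneg _
  have hm0 : ∀ v : V, (0:ℝ) ≤ (mv G f c v : ℝ) := fun v => Nat.cast_nonneg _
  have hf0 : ∀ v : V, (0:ℝ) ≤ (f v : ℝ) := fun v => Nat.cast_nonneg _
  have hwf : ∀ v : V, (fbox G f c v).x1 ≤ (fbox G f c v).x2 ∧
      (fbox G f c v).y1 ≤ (fbox G f c v).y2 := by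
    intro v
    rcases fin2cases (c v) with h | h
    · rw [fbox0 h]
      exact ⟨le_trans (min_le_left _ _) (hlf v), by have := hlf v; simp only []; linarith⟩
    · rw [fbox1 h]
      exact ⟨by have := hlf v; simp only []; linarith,
        le_trans (min_le_left _ _) (hlf v)⟩
  -- the two crucial overlap characterizations
  have ov0 : ∀ u v : V, c u = 0 → c v = 0 → f u < f v →
      (G.Adj u v ↔ ((fbox G f c u).toSet ∩ (fbox G f c v).toSet).Nonempty) := by
    intro u v hcu hcv hlt
    rw [box_inter_iff _ _ (hwf u) (hwf v),
      adj_same_iff hfinj hcons (hcu.trans hcv.symm) hlt, fbox0 hcu, fbox0 hcv]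
    simp only []
    have hflt : (f u : ℝ) < f v := by exact_mod_cast hlt
    constructor
    · intro h
      have h' : (lv G f c v : ℝ) ≤ (f u : ℝ) := by exact_mod_cast h
      refine ⟨le_trans (min_le_left _ _) (by linarith [hlf u]), ?_, ?_, ?_⟩
      · exact le_trans (min_le_right _ _) (by linarith [hmf v, hfM v, hf0 u])
      · linarith [hlf u]
      · linarith
    · rintro ⟨_, _, _, h4⟩
      have : (lv G f c v : ℝ) ≤ (f u : ℝ) := by linarith
      exact_mod_cast this
  have ov1 : ∀ u v : V, c u = 1 → c v = 1 → f u < f v →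
      (G.Adj u v ↔ ((fbox G f c u).toSet ∩ (fbox G f c v).toSet).Nonempty) := by
    intro u v hcu hcv hlt
    rw [box_inter_iff _ _ (hwf u) (hwf v),
      adj_same_iff hfinj hcons (hcu.trans hcv.symm) hlt, fbox1 hcu, fbox1 hcv]
    simp only []
    have hflt : (f u : ℝ) < f v := by exact_mod_cast hlt
    constructor
    · intro h
      have h' : (lv G f c v : ℝ) ≤ (f u : ℝ) := by exact_mod_cast h
      refine ⟨by linarith [hlf u], by linarith, ?_, ?_⟩
      · exact le_trans (min_le_right _ _) (by linarith [hmf u, hfM u, hf0 v])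
      · exact le_trans (min_le_right _ _) (by linarith [hmf v, hfM v, hf0 u])
    · rintro ⟨_, h2, _, _⟩
      have : (lv G f c v : ℝ) ≤ (f u : ℝ) := by linarith
      exact_mod_cast this
  have ovx : ∀ u v : V, c u = 0 → c v = 1 →
      (G.Adj u v ↔ ((fbox G f c u).toSet ∩ (fbox G f c v).toSet).Nonempty) := by
    intro u v hcu hcv
    rw [box_inter_iff _ _ (hwf u) (hwf v),
      adj_cross_iff hfinj hcons (by rw [hcu, hcv]; decide), fbox0 hcu, fbox1 hcv]
    simp only []
    constructor
    · rintro ⟨h1, h2⟩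
      have h1' : (mv G f c u : ℝ) ≤ (f v : ℝ) := by exact_mod_cast h1
      have h2' : (mv G f c v : ℝ) ≤ (f u : ℝ) := by exact_mod_cast h2
      refine ⟨le_trans (min_le_right _ _) (by linarith), ?_, ?_, ?_⟩
      · linarith [hlf v, hfM v, hf0 u]
      · linarith [hlf u, hfM u, hf0 v]
      · exact le_trans (min_le_right _ _) (by linarith)
    · rintro ⟨h1, _, _, h4⟩
      have hx : (mv G f c u : ℝ) - M ≤ (f v : ℝ) - M := by
        rcases min_le_iff.mp h1 with h | h
        · exfalso; linarith [hl0 u, hfM v]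
        · exact h
      have hy : (mv G f c v : ℝ) - M ≤ (f u : ℝ) - M := by
        rcases min_le_iff.mp h4 with h | h
        · exfalso; linarith [hl0 v, hfM u]
        · exact h
      constructor
      · have : (mv G f c u : ℝ) ≤ (f v : ℝ) := by linarith
        exact_mod_cast this
      · have : (mv G f c v : ℝ) ≤ (f u : ℝ) := by linarith
        exact_mod_cast this
  refine ⟨fbox G f c, -M, M, ?_, ?_, ?_, ?_⟩
  · -- TwoDiagonal
    refine ⟨by linarith, by linarith, ?_, ?_⟩
    · intro u v hne heq
      have hx := congrArg Prod.fst heq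
      have hy := congrArg Prod.snd heq
      simp only [] at hx hy
      rcases fin2cases (c u) with hcu | hcu <;> rcases fin2cases (c v) with hcv | hcv
      · rw [fbox0 hcu, fbox0 hcv] at hx
        simp only [] at hx
        exact hne (hfinj (by exact_mod_cast hx))
      · rw [fbox0 hcu, fbox1 hcv] at hx
        simp only [] at hx
        have := hf0 u; have := hf0 v; have := hfM v
        linarith [hx.le, hx.ge]
      · rw [fbox1 hcu, fbox0 hcv] at hx
        simp only [] at hx
        have := hf0 u; have := hf0 v; have := hfM u
        linarith [hx.le, hx.ge]
      · rw [fbox1 hcu, fbox1 hcv] at hy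
        simp only [] at hy
        exact hne (hfinj (by exact_mod_cast hy))
    · intro v
      rcases fin2cases (c v) with h | h
      · rw [fbox0 h]
        exact Or.inl ⟨by ring, hf0 v, by have := hfM v; simp only []; linarith⟩
      · rw [fbox1 h]
        exact Or.inr ⟨by ring, by have := hfM v; simp only []; linarith, hf0 v⟩
  · -- Blocking
    intro u v hu2 hv1 _
    have hcu : c u = 1 := by
      rcases fin2cases (c u) with h | h
      · exfalso
        rw [fbox0 h] at hu2
        simp only [] at hu2
        linarith
      · exact h
    have hcv : c v = 0 := by
      rcases fin2cases (c v) with h | h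
      · exact h
      · exfalso
        rw [fbox1 h] at hv1
        simp only [] at hv1
        linarith
    by_cases hcase : mv G f c v ≤ f u
    · left
      have hcase' : (mv G f c v : ℝ) ≤ (f u : ℝ) := by exact_mod_cast hcase
      refine ⟨(max (fbox G f c u).x1 (fbox G f c v).x1, (fbox G f c v).y1), ?_, ?_⟩
      · exact ⟨⟨le_max_left _ _, max_le (hwf u).1 (by
          rw [fbox1 hcu, fbox0 hcv]; simp only []
          exact le_trans (min_le_right _ _) (by linarith))⟩, Set.mem_univ _⟩
      · exact ⟨⟨le_max_right _ _, max_le (by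
          rw [fbox1 hcu, fbox0 hcv]; simp only []
          linarith [hlf u, hfM u, hf0 v]) (hwf v).1⟩,
          le_rfl, (hwf v).2⟩
    · right
      have hc2 : mv G f c u ≤ f v := by
        have h1 := mv_le_self (G := G) (f := f) (c := c) v
        have h2 := mv_le_self (G := G) (f := f) (c := c) u
        by_contra hcon
        push_neg at hcon hcase
        omega
      have hc2' : (mv G f c u : ℝ) ≤ (f v : ℝ) := by exact_mod_cast hc2
      refine ⟨((fbox G f c u).x1, max (fbox G f c u).y1 (fbox G f c v).y1), ?_, ?_⟩
      · exact ⟨Set.mem_univ _, ⟨le_max_right _ _, max_le (by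
          rw [fbox1 hcu, fbox0 hcv]; simp only []
          exact le_trans (min_le_right _ _) (by linarith)) (hwf v).2⟩⟩
      · exact ⟨⟨le_rfl, (hwf u).1⟩, ⟨le_max_left _ _, max_le (hwf u).2 (by
          rw [fbox1 hcu, fbox0 hcv]; simp only []
          linarith [hlf v, hfM v, hf0 u])⟩⟩
  · -- BiSemiProper
    intro u v hdiff hxlt
    rcases fin2cases (c u) with hcu | hcu <;> rcases fin2cases (c v) with hcv | hcv
    · rw [fbox0 hcu, fbox0 hcv] at hdiff hxlt ⊢
      simp only [] at hdiff hxlt ⊢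
      have hlt : f u < f v := by exact_mod_cast hxlt
      have h1 : (lv G f c u : ℝ) ≤ (lv G f c v : ℝ) := by
        exact_mod_cast lv_mono hrev (hcu.trans hcv.symm) hlt
      have h2 : (mv G f c u : ℝ) ≤ (mv G f c v : ℝ) := by
        exact_mod_cast mv_mono hrev (hcu.trans hcv.symm) hlt
      exact ⟨le_min (le_trans (min_le_left _ _) h1)
        (le_trans (min_le_right _ _) (by linarith)), by linarith⟩
    · exfalso
      rw [fbox0 hcu, fbox1 hcv] at hdiff
      simp only [] at hdiff
      linarith
    · exfalso
      rw [fbox1 hcu, fbox0 hcv] at hdiff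
      simp only [] at hdiff
      linarith
    · rw [fbox1 hcu, fbox1 hcv] at hdiff hxlt ⊢
      simp only [] at hdiff hxlt ⊢
      have hlt : f u < f v := by
        have : (f u : ℝ) < f v := by linarith
        exact_mod_cast this
      have h1 : (lv G f c u : ℝ) ≤ (lv G f c v : ℝ) := by
        exact_mod_cast lv_mono hrev (hcu.trans hcv.symm) hlt
      have h2 : (mv G f c u : ℝ) ≤ (mv G f c v : ℝ) := by
        exact_mod_cast mv_mono hrev (hcu.trans hcv.symm) hlt
      exact ⟨by linarith, le_min (le_trans (min_le_left _ _) h1)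
        (le_trans (min_le_right _ _) (by linarith))⟩
  · -- IsBoxModel
    refine ⟨hwf, ?_⟩
    intro u v hne
    have hfne : f u ≠ f v := fun h => hne (hfinj h)
    rcases fin2cases (c u) with hcu | hcu <;> rcases fin2cases (c v) with hcv | hcv
    · rcases lt_or_gt_of_ne hfne with hlt | hgt
      · exact ov0 u v hcu hcv hlt
      · rw [G.adj_comm, Set.inter_comm]
        exact ov0 v u hcv hcu hgt
    · exact ovx u v hcu hcv
    · rw [G.adj_comm, Set.inter_comm]
      exact ovx v u hcv hcu
    · rcases lt_or_gt_of_ne hfne with hlt | hgt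
      · exact ov1 u v hcu hcv hlt
      · rw [G.adj_comm, Set.inter_comm]
        exact ov1 v u hcv hcu hgt

end ForwardModel


lemma weakly_of_two {V : Type*} {box : V → Box} {d1 d2 : ℝ}
    (h : TwoDiagonal box d1 d2) : WeaklyTwoDiagonal box d1 d2 :=
  ⟨lt_trans h.1 h.2.1, h.2.2.1, fun v => (h.2.2.2 v).imp (fun hh => hh.1) (fun hh => hh.1)⟩

end P2T

/-- A graph `G` is proper 2-thin if and only if it has a bi-semi-proper weakly
2-diagonal box intersection model; equivalently, if and only if it has a bi-semi-proper
blocking 2-diagonal model. -/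
theorem properTwoThin_iff_models {V : Type*} [Fintype V] (G : SimpleGraph V) :
    (ProperTwoThin G ↔ ∃ (box : V → Box) (d1 d2 : ℝ),
        WeaklyTwoDiagonal box d1 d2 ∧ BiSemiProper box ∧ IsBoxModel G box) ∧
    (ProperTwoThin G ↔ ∃ (box : V → Box) (d1 d2 : ℝ),
        TwoDiagonal box d1 d2 ∧ Blocking box d1 d2 ∧ BiSemiProper box ∧
          IsBoxModel G box) := by
  have fwd : ProperTwoThin G → ∃ (box : V → Box) (d1 d2 : ℝ),
      TwoDiagonal box d1 d2 ∧ Blocking box d1 d2 ∧ BiSemiProper box ∧ IsBoxModel G box := by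
    rintro ⟨f, hf, c, hc, hr⟩
    exact P2T.forward_main hf hc hr
  have bwd : (∃ (box : V → Box) (d1 d2 : ℝ),
      WeaklyTwoDiagonal box d1 d2 ∧ BiSemiProper box ∧ IsBoxModel G box) → ProperTwoThin G := by
    rintro ⟨box, d1, d2, ⟨hd, hinj, hdiag⟩, hbsp, hwf, hadj⟩
    exact P2T.backward_main ⟨hd, hinj, hdiag, hbsp, hwf, hadj⟩
  constructor
  · constructor
    · intro h
      obtain ⟨box, d1, d2, htd, _, hbsp, hmdl⟩ := fwd h
      exact ⟨box, d1, d2, P2T.weakly_of_two htd, hbsp, hmdl⟩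
    · exact bwd
  · constructor
    · exact fwd
    · rintro ⟨box, d1, d2, htd, _, hbsp, hmdl⟩
      exact bwd ⟨box, d1, d2, P2T.weakly_of_two htd, hbsp, hmdl⟩
end

section
/- A graph G is independent 2-thin if and only if G is bipartite and admits a bipartition (V^1,V^2) with linear orders on V^1 and V^2 such that the bipartite patterns R_2 and R_3 do not occur. -/
/-- `G` is independent 2-thin: it admits a vertex ordering and a partition into two
independent classes consistent with the ordering. -/
def IndepTwoThin {V : Type*} (G : SimpleGraph V) : Prop :=
  ∃ f : V → ℕ, Function.Injective f ∧ ∃ c : V → Fin 2,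
    ConsistentWith G f c ∧ ∀ u v : V, c u = c v → ¬ G.Adj u v

/-- The bipartite pattern `R₂` occurs (for part orders given by `f`): `a₁ < a₂` in one
part and `b₁ < b₂` in the other with `a₁b₂, a₂b₁` edges and `a₂b₂` a non-edge. -/
def OccursR2 {V : Type*} (G : SimpleGraph V) (c : V → Fin 2) (f : V → ℕ) : Prop :=
  ∃ a1 a2 b1 b2 : V, c a1 = c a2 ∧ c b1 = c b2 ∧ c a1 ≠ c b1 ∧
    f a1 < f a2 ∧ f b1 < f b2 ∧ G.Adj a1 b2 ∧ G.Adj a2 b1 ∧ ¬ G.Adj a2 b2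

/-- The bipartite pattern `R₃` occurs: `a₁ < a₂ < a₃` in one part, `b₁ < b₂ < b₃` in
the other, with `a₁b₃, a₃b₁, a₃b₃` edges and `a₂b₃, a₃b₂` non-edges. -/
def OccursR3 {V : Type*} (G : SimpleGraph V) (c : V → Fin 2) (f : V → ℕ) : Prop :=
  ∃ a1 a2 a3 b1 b2 b3 : V, c a1 = c a2 ∧ c a2 = c a3 ∧ c b1 = c b2 ∧ c b2 = c b3 ∧
    c a1 ≠ c b1 ∧ f a1 < f a2 ∧ f a2 < f a3 ∧ f b1 < f b2 ∧ f b2 < f b3 ∧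
    G.Adj a1 b3 ∧ G.Adj a3 b1 ∧ G.Adj a3 b3 ∧ ¬ G.Adj a2 b3 ∧ ¬ G.Adj a3 b2

private lemma fin2_eq {x y z : Fin 2} (h1 : x ≠ y) (h2 : z ≠ y) : x = z := by
  fin_cases x <;> fin_cases y <;> fin_cases z <;> simp_all

/-- In a nonempty set, there is a vertex `x` that is `f`-maximal in its own class and
whose neighborhood has no "gap": it is safe to place last. -/
private lemma exists_good {V : Type*} [DecidableEq V] (G : SimpleGraph V) (c : V → Fin 2)
    (hc : ∀ u v, G.Adj u v → c u ≠ c v) (f : V → ℕ) (hf : Function.Injective f)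
    (hR2 : ¬ OccursR2 G c f) (hR3 : ¬ OccursR3 G c f)
    (S : Finset V) (hS : S.Nonempty) :
    ∃ x ∈ S, (∀ y ∈ S, c y = c x → f y ≤ f x) ∧
      (∀ u ∈ S, ∀ v ∈ S, c u = c v → f u < f v → G.Adj x u → G.Adj x v) := by
  obtain ⟨z, hz⟩ := hS
  obtain ⟨a, haT, hamax⟩ := (S.filter (fun y => c y = c z)).exists_max_image f
    ⟨z, by simp [hz]⟩
  rw [Finset.mem_filter] at haT
  obtain ⟨haS, hcaz⟩ := haT
  have hamaxS : ∀ y ∈ S, c y = c a → f y ≤ f a := fun y hy hcy =>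
    hamax y (Finset.mem_filter.mpr ⟨hy, hcy.trans hcaz⟩)
  by_cases hga : ∀ u ∈ S, ∀ v ∈ S, c u = c v → f u < f v → G.Adj a u → G.Adj a v
  · exact ⟨a, haS, hamaxS, hga⟩
  push_neg at hga
  obtain ⟨x, hxS, y, hyS, hcxy, hfxy, hax, hay⟩ := hga
  have hcxa : c x ≠ c a := (hc a x hax).symm
  obtain ⟨b, hbT, hbmax⟩ := (S.filter (fun y' => c y' = c x)).exists_max_image f
    ⟨x, by simp [hxS]⟩
  rw [Finset.mem_filter] at hbT
  obtain ⟨hbS, hcbx⟩ := hbT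
  have hbmaxS : ∀ w ∈ S, c w = c b → f w ≤ f b := fun w hw hcw =>
    hbmax w (Finset.mem_filter.mpr ⟨hw, hcw.trans hcbx⟩)
  by_cases hgb : ∀ u ∈ S, ∀ v ∈ S, c u = c v → f u < f v → G.Adj b u → G.Adj b v
  · exact ⟨b, hbS, hbmaxS, hgb⟩
  push_neg at hgb
  obtain ⟨u, huS, v, hvS, hcuv, hfuv, hbu, hbv⟩ := hgb
  have hcub : c u ≠ c b := (hc b u hbu).symm
  have hcab : c a ≠ c b := by
    rw [hcbx]; exact fun h => hcxa h.symm
  have hcua : c u = c a := fin2_eq hcub hcab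
  have hcva : c v = c a := hcuv.symm.trans hcua
  have hcyb : c y = c b := hcxy.symm.trans hcbx.symm
  have hfva : f v ≤ f a := hamaxS v hvS hcva
  have hfyb : f y ≤ f b := hbmaxS y hyS hcyb
  have hcux : c u ≠ c x := by rw [hcua]; exact fun h => hcxa h.symm
  exfalso
  by_cases hab : G.Adj a b
  · -- R3 with (u, v, a) and (x, y, b)
    have hvna : v ≠ a := fun h => hbv (h ▸ hab.symm)
    have hynb : y ≠ b := fun h => hay (h ▸ hab)
    exact hR3 ⟨u, v, a, x, y, b, hcuv, hcva, hcxy, hcyb, hcux, hfuv,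
      lt_of_le_of_ne hfva (fun h => hvna (hf h)), hfxy,
      lt_of_le_of_ne hfyb (fun h => hynb (hf h)),
      hbu.symm, hax, hab, fun h => hbv h.symm, hay⟩
  · -- R2 with (u, a) and (x, b)
    exact hR2 ⟨u, a, x, b, hcua.symm ▸ rfl, hcbx.symm, hcux,
      lt_of_lt_of_le hfuv hfva, lt_of_lt_of_le hfxy hfyb, hbu.symm, hax, hab⟩

/-- Greedy construction of a consistent ordering. -/
private lemma exists_order {V : Type*} [DecidableEq V] (G : SimpleGraph V) (c : V → Fin 2)
    (hc : ∀ u v, G.Adj u v → c u ≠ c v) (f : V → ℕ) (hf : Function.Injective f)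
    (hR2 : ¬ OccursR2 G c f) (hR3 : ¬ OccursR3 G c f) :
    ∀ n (S : Finset V), S.card = n →
      ∃ g : V → ℕ, (∀ x ∈ S, g x < n) ∧
        (∀ u ∈ S, ∀ v ∈ S, g u = g v → u = v) ∧
        (∀ u ∈ S, ∀ v ∈ S, c u = c v → f u < f v → g u < g v) ∧
        (∀ u ∈ S, ∀ v ∈ S, ∀ w ∈ S, g u < g v → g v < g w → c u = c v →
          G.Adj w u → G.Adj w v) := by
  intro n
  induction n with
  | zero =>
    intro S hS
    have : S = ∅ := Finset.card_eq_zero.mp hS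
    subst this
    exact ⟨fun _ => 0, by simp, by simp, by simp, by simp⟩
  | succ n ih =>
    intro S hS
    have hSne : S.Nonempty := Finset.card_pos.mp (by omega)
    obtain ⟨x, hxS, hxmax, hxgood⟩ := exists_good G c hc f hf hR2 hR3 S hSne
    obtain ⟨g, hgb, hgi, hgm, hgc⟩ := ih (S.erase x)
      (by rw [Finset.card_erase_of_mem hxS, hS]; omega)
    have hup : ∀ y, y ≠ x → Function.update g x n y = g y :=
      fun y hy => Function.update_of_ne hy _ _
    have hbnd : ∀ y ∈ S, y ≠ x → Function.update g x n y < n := by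
      intro y hy hyx
      rw [hup y hyx]
      exact hgb y (Finset.mem_erase.mpr ⟨hyx, hy⟩)
    refine ⟨Function.update g x n, ?_, ?_, ?_, ?_⟩
    · intro y hy
      by_cases hyx : y = x
      · subst hyx; simp
      · exact (hbnd y hy hyx).trans (Nat.lt_succ_self n)
    · intro u hu v hv h
      by_cases hux : u = x <;> by_cases hvx : v = x
      · rw [hux, hvx]
      · exfalso
        rw [hux, Function.update_self, hup v hvx] at h
        have := hgb v (Finset.mem_erase.mpr ⟨hvx, hv⟩)
        omega
      · exfalso
        rw [hvx, Function.update_self, hup u hux] at h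
        have := hgb u (Finset.mem_erase.mpr ⟨hux, hu⟩)
        omega
      · rw [hup u hux, hup v hvx] at h
        exact hgi u (Finset.mem_erase.mpr ⟨hux, hu⟩) v (Finset.mem_erase.mpr ⟨hvx, hv⟩) h
    · intro u hu v hv hcuv hfuv
      have hux : u ≠ x := by
        intro h
        have := hxmax v hv (hcuv.symm.trans (congrArg c h))
        rw [← h] at this
        omega
      by_cases hvx : v = x
      · rw [hvx, Function.update_self]
        exact hbnd u hu hux
      · rw [hup u hux, hup v hvx]
        exact hgm u (Finset.mem_erase.mpr ⟨hux, hu⟩) v (Finset.mem_erase.mpr ⟨hvx, hv⟩)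
          hcuv hfuv
    · intro u hu v hv w hw h1 h2 hcuv hadj
      by_cases hwx : w = x
      · have hvx : v ≠ x := by
          intro h
          rw [h, hwx] at h2
          exact absurd h2 (lt_irrefl _)
        have hux : u ≠ x := by
          intro h
          rw [h, Function.update_self] at h1
          rw [hwx, Function.update_self] at h2
          omega
        rw [hup u hux, hup v hvx] at h1
        have huv : u ≠ v := fun h => absurd (h ▸ h1) (lt_irrefl _)
        have hfuv : f u < f v := by
          rcases lt_trichotomy (f u) (f v) with h | h | h
          · exact h
          · exact absurd (hf h) huv
          · have := hgm v (Finset.mem_erase.mpr ⟨hvx, hv⟩)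
              u (Finset.mem_erase.mpr ⟨hux, hu⟩) hcuv.symm h
            omega
        rw [hwx] at hadj ⊢
        exact hxgood u hu v hv hcuv hfuv hadj
      · have hvx : v ≠ x := by
          intro h
          rw [h, Function.update_self] at h2
          have := hbnd w hw hwx
          omega
        have hux : u ≠ x := by
          intro h
          rw [h, Function.update_self] at h1
          have := hbnd v hv hvx
          omega
        rw [hup u hux, hup v hvx] at h1
        rw [hup v hvx, hup w hwx] at h2
        exact hgc u (Finset.mem_erase.mpr ⟨hux, hu⟩) v (Finset.mem_erase.mpr ⟨hvx, hv⟩)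
          w (Finset.mem_erase.mpr ⟨hwx, hw⟩) h1 h2 hcuv hadj

/-- A graph `G` is independent 2-thin if and only if `G` is bipartite and admits a
bipartition `(V¹, V²)` with linear orders on `V¹` and `V²` such that the bipartite
patterns `R₂` and `R₃` do not occur. -/
theorem indepTwoThin_iff_bipartite_avoids_R2_R3 {V : Type*} [Fintype V]
    (G : SimpleGraph V) :
    IndepTwoThin G ↔ ∃ c : V → Fin 2, (∀ u v : V, G.Adj u v → c u ≠ c v) ∧
      ∃ f : V → ℕ, Function.Injective f ∧ ¬ OccursR2 G c f ∧ ¬ OccursR3 G c f := by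
  constructor
  · rintro ⟨f, hf, c, hcons, hindep⟩
    refine ⟨c, fun u v huv h => hindep u v h huv, f, hf, ?_, ?_⟩
    · rintro ⟨a1, a2, b1, b2, hca, hcb, hab, hfa, hfb, e1, e2, ne⟩
      have hne : a2 ≠ b2 := fun h => hab (by rw [hca, hcb, h])
      rcases lt_trichotomy (f a2) (f b2) with h | h | h
      · exact ne ((hcons a1 a2 b2 hfa h hca e1.symm).symm)
      · exact hne (hf h)
      · exact ne (hcons b1 b2 a2 hfb h hcb e2)
    · rintro ⟨a1, a2, a3, b1, b2, b3, h12, h23, k12, k23, hne, fa12, fa23, fb12, fb23,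
        e13, e31, e33, n23, n32⟩
      have h1 : f b3 < f a2 := by
        rcases lt_trichotomy (f a2) (f b3) with h | h | h
        · exact absurd (hcons a1 a2 b3 fa12 h h12 e13.symm).symm n23
        · exact absurd (hf h) (fun he => hne (by rw [h12, he, ← k23, ← k12]))
        · exact h
      have h2 : f a3 < f b2 := by
        rcases lt_trichotomy (f b2) (f a3) with h | h | h
        · exact absurd (hcons b1 b2 a3 fb12 h k12 e31) n32
        · exact absurd (hf h) (fun he => hne (by rw [h12, h23, ← he, ← k12]))
        · exact h
      omega
  · rintro ⟨c, hc, f, hf, hR2, hR3⟩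
    classical
    obtain ⟨g, _, hgi, _, hgc⟩ := exists_order G c hc f hf hR2 hR3
      (Finset.univ : Finset V).card Finset.univ rfl
    refine ⟨g, fun u v h => hgi u (Finset.mem_univ u) v (Finset.mem_univ v) h, c,
      fun u v w h1 h2 h3 h4 => hgc u (Finset.mem_univ u) v (Finset.mem_univ v)
        w (Finset.mem_univ w) h1 h2 h3 h4,
      fun u v hcv hadj => hc u v hadj hcv⟩
end
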